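/- arXiv:1511.06257 — 8 statements merged into one kernel-verified Lean document; each statement's English description precedes it below -/
import Mathlib

section
/- Let s > 0 and d₁, d₂ ≥ 1, and let a : ℕ^{d₂} × ℕ^{d₁} → ℂ satisfy: there exist r > 0 and C > 0 with |a(α,β)| ≤ C e^{−r(|α|^{1/(2s)} + |β|^{1/(2s)})} for all α, β. Then for every f : ℕ^{d₁} → ℂ such that for every ρ > 0 there is C_ρ > 0 with |f(β)| ≤ C_ρ e^{ρ|β|^{1/(2s)}} for all β, the series (Af)(α) = ∑_β a(α,β) f(β) converges absolutely for every α ∈ ℕ^{d₂}, and there exist r' > 0 and C' > 0 such that |(Af)(α)| ≤ C' e^{−r'|α|^{1/(2s)}} for all α. -/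
/-- `|α| = α₁ + ⋯ + α_d` as a real number. -/
noncomputable def msz {d : ℕ} (α : Fin d → ℕ) : ℝ := (∑ i, α i : ℕ)

lemma msz_nonneg {d : ℕ} (α : Fin d → ℕ) : 0 ≤ msz α := by
  unfold msz; positivity

/-- Summability of `exp (-(c * k^t))` over `ℕ`. -/
lemma summable_exp_neg_rpow_nat {c t : ℝ} (hc : 0 < c) (ht : 0 < t) :
    Summable fun k : ℕ => Real.exp (-(c * (k : ℝ) ^ t)) := by
  set m : ℕ := ⌈2 / t⌉₊ + 1 with hm
  set q : ℝ := m * t with hq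
  have hq1 : 1 < q := by
    have h1 : (2 / t : ℝ) ≤ ⌈2 / t⌉₊ := Nat.le_ceil _
    have h2 : (2 / t : ℝ) < m := by rw [hm]; push_cast; linarith
    have h3 : (2 : ℝ) < q := by
      rw [hq]
      calc (2 : ℝ) = 2 / t * t := by field_simp
        _ < m * t := mul_lt_mul_of_pos_right h2 ht
    linarith
  rw [← summable_nat_add_iff 1]
  have hbase : Summable fun n : ℕ => ((n + 1 : ℕ) : ℝ) ^ (-q) :=
    (summable_nat_add_iff (f := fun n : ℕ => (n : ℝ) ^ (-q)) 1).mpr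
      (Real.summable_nat_rpow.mpr (by linarith))
  apply Summable.of_nonneg_of_le (fun n => (Real.exp_pos _).le) _
    (hbase.mul_left (m.factorial / c ^ m))
  intro n
  set x : ℝ := c * ((n + 1 : ℕ) : ℝ) ^ t with hx
  have hp0 : (0 : ℝ) < ((n + 1 : ℕ) : ℝ) := by positivity
  have hx0 : 0 < x := by rw [hx]; positivity
  have key : x ^ m / m.factorial ≤ Real.exp x :=
    Real.pow_div_factorial_le_exp _ hx0.le m
  have hxm : x ^ m = c ^ m * ((n + 1 : ℕ) : ℝ) ^ q := by
    rw [hx, mul_pow, ← Real.rpow_natCast (((n + 1 : ℕ) : ℝ) ^ t) m,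
      ← Real.rpow_mul hp0.le, hq, mul_comm t (m : ℝ)]
  have hpm : 0 < x ^ m / m.factorial := by positivity
  have hexp : Real.exp (-x) ≤ m.factorial / x ^ m :=
    calc Real.exp (-x) = (Real.exp x)⁻¹ := Real.exp_neg x
      _ ≤ (x ^ m / m.factorial)⁻¹ := inv_anti₀ hpm key
      _ = m.factorial / x ^ m := by rw [inv_div]
  refine hexp.trans_eq ?_
  rw [hxm, Real.rpow_neg hp0.le]
  rw [div_eq_mul_inv, div_eq_mul_inv, mul_inv, mul_assoc]

/-- Summability of products over `Fin d → ℕ`. -/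
lemma summable_pi_prod {g : ℕ → ℝ} (hg0 : ∀ k, 0 ≤ g k) (hg : Summable g) :
    ∀ d : ℕ, Summable fun β : Fin d → ℕ => ∏ i, g (β i) := by
  intro d
  induction d with
  | zero => exact summable_of_finite_support (Set.toFinite _)
  | succ n ih =>
      have := (Summable.mul_of_nonneg hg ih (fun k => hg0 k)
        (fun β => Finset.prod_nonneg fun i _ => hg0 _))
      have h2 := ((Fin.consEquiv fun _ : Fin (n + 1) => ℕ).symm.summable_iff
        (f := fun p : ℕ × (Fin n → ℕ) => g p.1 * ∏ i, g (p.2 i))).mpr this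
      refine h2.congr fun β => ?_
      simp [Fin.consEquiv, Fin.prod_univ_succ, Fin.tail]

/-- A matrix in `ℓ_s` (Roumieu decay in both indices, for some `r > 0`)
maps `ℓ_s'` (subexponential growth for every `ρ > 0`) into `ℓ_s`: the series
`(Af)(α) = ∑_β a(α,β) f(β)` converges absolutely and decays like `e^{-r'|α|^{1/(2s)}}`
for some `r' > 0`. -/
theorem stmt2
    (s : ℝ) (hs : 0 < s) (d₁ d₂ : ℕ) (hd₁ : 1 ≤ d₁) (hd₂ : 1 ≤ d₂)
    (a : (Fin d₂ → ℕ) → (Fin d₁ → ℕ) → ℂ)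
    (ha : ∃ r > (0:ℝ), ∃ C > (0:ℝ), ∀ (α : Fin d₂ → ℕ) (β : Fin d₁ → ℕ),
      ‖a α β‖ ≤ C * Real.exp (-(r * (msz α ^ (1/(2*s)) + msz β ^ (1/(2*s))))))
    (f : (Fin d₁ → ℕ) → ℂ)
    (hf : ∀ ρ > (0:ℝ), ∃ C > (0:ℝ), ∀ β : Fin d₁ → ℕ,
      ‖f β‖ ≤ C * Real.exp (ρ * msz β ^ (1/(2*s)))) :
    (∀ α : Fin d₂ → ℕ, Summable fun β => ‖a α β * f β‖) ∧
    (∃ r' > (0:ℝ), ∃ C' > (0:ℝ), ∀ α : Fin d₂ → ℕ,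
      ‖∑' β, a α β * f β‖ ≤ C' * Real.exp (-(r' * msz α ^ (1/(2*s))))) := by
  obtain ⟨r, hr, C, hC, hab⟩ := ha
  obtain ⟨Cρ, hCρ, hfb⟩ := hf (r / 2) (by linarith)
  set t : ℝ := 1 / (2 * s) with htdef
  have ht : 0 < t := by positivity
  -- coefficient for the product comparison
  have hd₁' : (0 : ℝ) < d₁ := by
    have : 0 < d₁ := hd₁
    exact_mod_cast this
  set c : ℝ := r / (2 * d₁) with hcdef
  have hc : 0 < c := by positivity
  set g : ℕ → ℝ := fun k => Real.exp (-(c * (k : ℝ) ^ t)) with hgdef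
  have hg0 : ∀ k, 0 ≤ g k := fun k => (Real.exp_pos _).le
  have hgsum : Summable g := summable_exp_neg_rpow_nat hc ht
  have hprodsum : Summable fun β : Fin d₁ → ℕ => ∏ i, g (β i) :=
    summable_pi_prod hg0 hgsum d₁
  -- key pointwise bound
  have hbound : ∀ (α : Fin d₂ → ℕ) (β : Fin d₁ → ℕ),
      ‖a α β * f β‖ ≤
        (C * Cρ * Real.exp (-(r * msz α ^ t))) * ∏ i, g (β i) := by
    intro α β
    have h1 : ‖a α β * f β‖ ≤
        (C * Real.exp (-(r * (msz α ^ t + msz β ^ t)))) *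
        (Cρ * Real.exp (r / 2 * msz β ^ t)) := by
      rw [norm_mul]
      exact mul_le_mul (hab α β) (hfb β) (norm_nonneg _)
        (by positivity)
    refine h1.trans ?_
    -- compare `exp (-(r/2) * (∑β)^t)` with the product
    have hsumpow : ∑ i, ((β i : ℝ)) ^ t ≤ d₁ * (msz β) ^ t := by
      have : ∀ i, ((β i : ℝ)) ^ t ≤ (msz β) ^ t := by
        intro i
        apply Real.rpow_le_rpow (by positivity) _ ht.le
        unfold msz
        exact_mod_cast Finset.single_le_sum (f := fun i => β i)
          (fun i _ => Nat.zero_le _) (Finset.mem_univ i)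
      calc ∑ i, ((β i : ℝ)) ^ t ≤ ∑ _i : Fin d₁, (msz β) ^ t :=
            Finset.sum_le_sum fun i _ => this i
        _ = d₁ * (msz β) ^ t := by simp [mul_comm]
    have hprod : Real.exp (-(r / 2 * msz β ^ t)) ≤ ∏ i, g (β i) := by
      have : ∏ i, g (β i) = Real.exp (-(c * ∑ i, ((β i : ℝ)) ^ t)) := by
        rw [← Real.exp_sum]
        congr 1
        rw [Finset.mul_sum]
        simp [neg_eq_iff_eq_neg, Finset.sum_neg_distrib]
      rw [this]
      apply Real.exp_le_exp.mpr
      have : c * ∑ i, ((β i : ℝ)) ^ t ≤ c * (d₁ * (msz β) ^ t) :=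
        mul_le_mul_of_nonneg_left hsumpow hc.le
      have hcd : c * (d₁ * (msz β) ^ t) = r / 2 * (msz β) ^ t := by
        rw [hcdef]; field_simp
      linarith [this, hcd ▸ this]
    have hee : Real.exp (-(r * (msz α ^ t + msz β ^ t))) * Real.exp (r / 2 * msz β ^ t)
        = Real.exp (-(r * msz α ^ t)) * Real.exp (-(r / 2 * msz β ^ t)) := by
      rw [← Real.exp_add, ← Real.exp_add]
      ring_nf
    calc C * Real.exp (-(r * (msz α ^ t + msz β ^ t))) * (Cρ * Real.exp (r / 2 * msz β ^ t))
        = C * Cρ * (Real.exp (-(r * (msz α ^ t + msz β ^ t))) * Real.exp (r / 2 * msz β ^ t)) := by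
          ring
      _ = (C * Cρ * Real.exp (-(r * msz α ^ t))) * Real.exp (-(r / 2 * msz β ^ t)) := by
          rw [hee]; ring
      _ ≤ (C * Cρ * Real.exp (-(r * msz α ^ t))) * ∏ i, g (β i) :=
          mul_le_mul_of_nonneg_left hprod (by positivity)
  have hsummable : ∀ α : Fin d₂ → ℕ, Summable fun β => ‖a α β * f β‖ := by
    intro α
    exact Summable.of_nonneg_of_le (fun β => norm_nonneg _) (hbound α)
      (hprodsum.mul_left _)
  refine ⟨hsummable, r, hr, ?_⟩
  set S : ℝ := ∑' β : Fin d₁ → ℕ, ∏ i, g (β i) with hSdef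
  have hS0 : 0 ≤ S := tsum_nonneg fun β => Finset.prod_nonneg fun i _ => hg0 _
  refine ⟨C * Cρ * S + 1, by positivity, fun α => ?_⟩
  have h1 : ‖∑' β, a α β * f β‖ ≤ ∑' β, ‖a α β * f β‖ :=
    norm_tsum_le_tsum_norm (hsummable α)
  have h2 : ∑' β, ‖a α β * f β‖ ≤
      ∑' β : Fin d₁ → ℕ, (C * Cρ * Real.exp (-(r * msz α ^ t))) * ∏ i, g (β i) :=
    Summable.tsum_le_tsum (hbound α) (hsummable α) (hprodsum.mul_left _)
  have h3 : ∑' β : Fin d₁ → ℕ, (C * Cρ * Real.exp (-(r * msz α ^ t))) * ∏ i, g (β i)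
      = (C * Cρ * Real.exp (-(r * msz α ^ t))) * S := tsum_mul_left
  have h4 : (C * Cρ * Real.exp (-(r * msz α ^ t))) * S ≤
      (C * Cρ * S + 1) * Real.exp (-(r * msz α ^ t)) := by
    have := Real.exp_pos (-(r * msz α ^ t))
    nlinarith
  calc ‖∑' β, a α β * f β‖ ≤ ∑' β, ‖a α β * f β‖ := h1
    _ ≤ _ := h2
    _ = _ := h3
    _ ≤ (C * Cρ * S + 1) * Real.exp (-(r * msz α ^ t)) := h4
end

section
/- Let s > 0 and d₁, d₂ ≥ 1, and let a : ℕ^{d₂} × ℕ^{d₁} → ℂ satisfy: for every r > 0 there is C_r > 0 with |a(α,β)| ≤ C_r e^{−r(|α|^{1/(2s)} + |β|^{1/(2s)})} for all α, β. Then for every f : ℕ^{d₁} → ℂ for which there exist ρ₀ > 0 and C > 0 with |f(β)| ≤ C e^{ρ₀|β|^{1/(2s)}} for all β, the series (Af)(α) = ∑_β a(α,β) f(β) converges absolutely for every α ∈ ℕ^{d₂}, and for every r > 0 there is C'_r > 0 with |(Af)(α)| ≤ C'_r e^{−r|α|^{1/(2s)}} for all α. -/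
lemma aux_summable_exp (c ε : ℝ) (hc : 0 < c) (hε : 0 < ε) :
    Summable fun n : ℕ => Real.exp (-(c * (n : ℝ) ^ ε)) := by
  rw [← summable_nat_add_iff 1]
  set k : ℕ := ⌈2 / ε⌉₊ with hk
  have hk2 : 2 ≤ ε * k := by
    have h1 : 2 / ε ≤ (k : ℝ) := Nat.le_ceil _
    calc (2:ℝ) = ε * (2 / ε) := by field_simp
    _ ≤ ε * k := by nlinarith
  have hsum : Summable fun n : ℕ => ((Nat.factorial k) : ℝ) / c ^ k * (1 / ((n + 1 : ℕ) : ℝ) ^ 2) := by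
    apply Summable.mul_left
    exact (summable_nat_add_iff (f := fun n : ℕ => 1 / (n : ℝ) ^ 2) 1).mpr
      (Real.summable_one_div_nat_pow.mpr one_lt_two)
  apply hsum.of_nonneg_of_le (fun n => (Real.exp_pos _).le)
  intro n
  set m : ℝ := ((n + 1 : ℕ) : ℝ) with hm
  have hm1 : (1:ℝ) ≤ m := by
    rw [hm]
    exact_mod_cast Nat.succ_le_succ (Nat.zero_le n)
  have hm0 : (0:ℝ) < m := by linarith
  have h1 : (c * m ^ ε) ^ k / (Nat.factorial k) ≤ Real.exp (c * m ^ ε) :=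
    Real.pow_div_factorial_le_exp _ (by positivity) k
  have h3 : (m ^ ε) ^ k = m ^ (ε * k) := by
    rw [← Real.rpow_natCast (m ^ ε) k, ← Real.rpow_mul hm0.le]
  have h2 : m ^ (2:ℕ) ≤ (m ^ ε) ^ k := by
    rw [h3, ← Real.rpow_natCast m 2]
    exact Real.rpow_le_rpow_of_exponent_le hm1 (by exact_mod_cast hk2)
  have hεpos : (0:ℝ) < m ^ ε := Real.rpow_pos_of_pos hm0 ε
  have h4 : Real.exp (-(c * m ^ ε)) ≤ ((Nat.factorial k) : ℝ) / (c * m ^ ε) ^ k := by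
    have heq : ((c * m ^ ε) ^ k / ((Nat.factorial k) : ℝ))⁻¹ = ((Nat.factorial k) : ℝ) / (c * m ^ ε) ^ k := inv_div _ _
    rw [Real.exp_neg, ← heq]
    exact inv_anti₀ (by positivity) h1
  calc Real.exp (-(c * m ^ ε)) ≤ ((Nat.factorial k) : ℝ) / (c * m ^ ε) ^ k := h4
  _ = ((Nat.factorial k) : ℝ) / (c ^ k * (m ^ ε) ^ k) := by rw [mul_pow]
  _ ≤ ((Nat.factorial k) : ℝ) / (c ^ k * m ^ (2:ℕ)) := by
      gcongr
  _ = ((Nat.factorial k) : ℝ) / c ^ k * (1 / m ^ 2) := by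
      rw [div_mul_div_comm, mul_one]

lemma aux_summable_pi {g : ℕ → ℝ} (hg0 : ∀ n, 0 ≤ g n) (hg : Summable g) (d : ℕ) :
    Summable fun β : Fin d → ℕ => ∏ i, g (β i) := by
  induction d with
  | zero =>
    exact (hasSum_fintype _).summable
  | succ d ih =>
    have h := hg.mul_of_nonneg ih hg0 (fun β => Finset.prod_nonneg fun i _ => hg0 _)
    rw [← (Fin.consEquiv fun _ : Fin (d + 1) => ℕ).summable_iff]
    apply h.congr
    intro p
    have hp : (∏ i : Fin (d + 1), g ((Fin.cons p.1 p.2 : Fin (d + 1) → ℕ) i)) =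
        g p.1 * ∏ i : Fin d, g (p.2 i) := by
      rw [Fin.prod_univ_succ]
      simp
    rw [← hp]
    simp only [Function.comp_apply, Fin.consEquiv_apply]

lemma aux_summable_msz (d : ℕ) (hd : 1 ≤ d) (ε : ℝ) (hε : 0 < ε) :
    Summable fun β : Fin d → ℕ => Real.exp (-(msz β ^ ε)) := by
  have hd0 : (0:ℝ) < d := by exact_mod_cast hd
  have hc : (0:ℝ) < 1 / d := by positivity
  have hg : Summable fun n : ℕ => Real.exp (-(1 / d * (n : ℝ) ^ ε)) :=
    aux_summable_exp _ _ hc hε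
  have hpi := aux_summable_pi (fun n => (Real.exp_pos _).le) hg d
  apply hpi.of_nonneg_of_le (fun β => (Real.exp_pos _).le)
  intro β
  rw [← Real.exp_sum]
  apply Real.exp_le_exp.mpr
  have hms : 0 ≤ msz β := Nat.cast_nonneg _
  have key : ∀ i, ((β i : ℝ)) ^ ε ≤ msz β ^ ε := by
    intro i
    apply Real.rpow_le_rpow (Nat.cast_nonneg _) _ hε.le
    unfold msz
    exact_mod_cast Finset.single_le_sum (fun j _ => Nat.zero_le (β j)) (Finset.mem_univ i)
  have hsum : ∑ i, ((β i : ℝ)) ^ ε ≤ d * msz β ^ ε := by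
    calc ∑ i, ((β i : ℝ)) ^ ε ≤ ∑ _i : Fin d, msz β ^ ε := Finset.sum_le_sum fun i _ => key i
    _ = d * msz β ^ ε := by rw [Finset.sum_const, Finset.card_univ, Fintype.card_fin, nsmul_eq_mul]
  have heq : ∑ i, -(1 / (d:ℝ) * ((β i : ℝ)) ^ ε) = -(1 / (d:ℝ) * ∑ i, ((β i : ℝ)) ^ ε) := by
    rw [Finset.mul_sum, ← Finset.sum_neg_distrib]
  rw [heq, neg_le_neg_iff]
  have h5 : 1 / (d:ℝ) * (∑ i, ((β i : ℝ)) ^ ε) ≤ 1 / (d:ℝ) * ((d:ℝ) * msz β ^ ε) :=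
    mul_le_mul_of_nonneg_left hsum hc.le
  have h6 : 1 / (d:ℝ) * ((d:ℝ) * msz β ^ ε) = msz β ^ ε := by field_simp
  linarith

/-- A matrix in `ℓ_{0,s}` (Beurling decay: for every `r > 0`) maps `ℓ_{0,s}'`
(exponential growth of some order `ρ₀ > 0`) into `ℓ_{0,s}`: the series
`(Af)(α) = ∑_β a(α,β) f(β)` converges absolutely and for every `r > 0` it is
`O(e^{-r|α|^{1/(2s)}})`. -/
theorem stmt4
    (s : ℝ) (hs : 0 < s) (d₁ d₂ : ℕ) (hd₁ : 1 ≤ d₁) (hd₂ : 1 ≤ d₂)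
    (a : (Fin d₂ → ℕ) → (Fin d₁ → ℕ) → ℂ)
    (ha : ∀ r > (0:ℝ), ∃ C > (0:ℝ), ∀ (α : Fin d₂ → ℕ) (β : Fin d₁ → ℕ),
      ‖a α β‖ ≤ C * Real.exp (-(r * (msz α ^ (1/(2*s)) + msz β ^ (1/(2*s))))))
    (f : (Fin d₁ → ℕ) → ℂ)
    (hf : ∃ ρ₀ > (0:ℝ), ∃ C > (0:ℝ), ∀ β : Fin d₁ → ℕ,
      ‖f β‖ ≤ C * Real.exp (ρ₀ * msz β ^ (1/(2*s)))) :
    (∀ α : Fin d₂ → ℕ, Summable fun β => ‖a α β * f β‖) ∧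
    (∀ r > (0:ℝ), ∃ C' > (0:ℝ), ∀ α : Fin d₂ → ℕ,
      ‖∑' β, a α β * f β‖ ≤ C' * Real.exp (-(r * msz α ^ (1/(2*s))))) := by
  obtain ⟨ρ₀, hρ₀, C, hC, hfb⟩ := hf
  set ε : ℝ := 1 / (2 * s) with hεdef
  have hε : 0 < ε := by positivity
  have hS : Summable fun β : Fin d₁ → ℕ => Real.exp (-(msz β ^ ε)) :=
    aux_summable_msz d₁ hd₁ ε hε
  -- key pointwise bound
  have key : ∀ r > (0:ℝ), ∃ C₁ > (0:ℝ), ∀ (α : Fin d₂ → ℕ) (β : Fin d₁ → ℕ),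
      ‖a α β * f β‖ ≤ C₁ * C * Real.exp (-(r * msz α ^ ε)) * Real.exp (-(msz β ^ ε)) := by
    intro r hr
    obtain ⟨C₁, hC₁, hab⟩ := ha (r + ρ₀ + 1) (by linarith)
    refine ⟨C₁, hC₁, fun α β => ?_⟩
    have hA : 0 ≤ msz α ^ ε := Real.rpow_nonneg (Nat.cast_nonneg _) _
    have hB : 0 ≤ msz β ^ ε := Real.rpow_nonneg (Nat.cast_nonneg _) _
    calc ‖a α β * f β‖ = ‖a α β‖ * ‖f β‖ := norm_mul _ _
    _ ≤ (C₁ * Real.exp (-((r + ρ₀ + 1) * (msz α ^ ε + msz β ^ ε)))) *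
        (C * Real.exp (ρ₀ * msz β ^ ε)) := by
        apply mul_le_mul (hab α β) (hfb β) (norm_nonneg _)
        positivity
    _ = C₁ * C * Real.exp (-((r + ρ₀ + 1) * (msz α ^ ε + msz β ^ ε)) + ρ₀ * msz β ^ ε) := by
        rw [Real.exp_add]; ring
    _ ≤ C₁ * C * Real.exp (-(r * msz α ^ ε) + -(msz β ^ ε)) := by
        have hexp : -((r + ρ₀ + 1) * (msz α ^ ε + msz β ^ ε)) + ρ₀ * msz β ^ ε ≤
            -(r * msz α ^ ε) + -(msz β ^ ε) := by
          nlinarith [mul_nonneg hr.le hA, mul_nonneg hr.le hB, mul_nonneg hρ₀.le hA,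
            mul_nonneg hρ₀.le hB, hA, hB]
        exact mul_le_mul_of_nonneg_left (Real.exp_le_exp.mpr hexp) (by positivity)
    _ = C₁ * C * Real.exp (-(r * msz α ^ ε)) * Real.exp (-(msz β ^ ε)) := by
        rw [Real.exp_add]; ring
  have hsummable : ∀ α : Fin d₂ → ℕ, Summable fun β => ‖a α β * f β‖ := by
    intro α
    obtain ⟨C₁, hC₁, hbd⟩ := key 1 one_pos
    exact ((hS.mul_left (C₁ * C * Real.exp (-(1 * msz α ^ ε)))).of_nonneg_of_le
      (fun β => norm_nonneg _) (fun β => hbd α β))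
  refine ⟨hsummable, fun r hr => ?_⟩
  obtain ⟨C₁, hC₁, hbd⟩ := key r hr
  set S : ℝ := ∑' β : Fin d₁ → ℕ, Real.exp (-(msz β ^ ε)) with hSdef
  have hS0 : 0 ≤ S := tsum_nonneg fun β => (Real.exp_pos _).le
  refine ⟨C₁ * C * (S + 1), by positivity, fun α => ?_⟩
  have hA : 0 ≤ msz α ^ ε := Real.rpow_nonneg (Nat.cast_nonneg _) _
  calc ‖∑' β, a α β * f β‖ ≤ ∑' β, ‖a α β * f β‖ := norm_tsum_le_tsum_norm (hsummable α)
  _ ≤ ∑' β : Fin d₁ → ℕ,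
      C₁ * C * Real.exp (-(r * msz α ^ ε)) * Real.exp (-(msz β ^ ε)) := by
      exact Summable.tsum_le_tsum (fun β => hbd α β) (hsummable α)
        (hS.mul_left (C₁ * C * Real.exp (-(r * msz α ^ ε))))
  _ = C₁ * C * Real.exp (-(r * msz α ^ ε)) * S := by rw [tsum_mul_left]
  _ ≤ C₁ * C * (S + 1) * Real.exp (-(r * msz α ^ ε)) := by
      have h7 : 0 ≤ C₁ * C * Real.exp (-(r * msz α ^ ε)) := by positivity
      nlinarith [h7, hS0, mul_nonneg h7 hS0]
end

section
/- Let σ > 0 and d₁, d₂ ≥ 1, and let a : ℕ^{d₂} × ℕ^{d₁} → ℂ satisfy |a(α,β)| ≤ C R^{|α|+|β|} (α! β!)^{−1/(2σ)} for some C, R > 0 and all α, β. Then there exist constants C', h, c > 0, strictly positive families (λ_β)_{β∈ℕ^{d₁}} and (μ_α)_{α∈ℕ^{d₂}}, and a matrix a₀ : ℕ^{d₂} × ℕ^{d₁} → ℂ, such that a(α,β) = μ_α · a₀(α,β) · λ_β for all α, β, with λ_β ≤ C' h^{|β|} (β!)^{−1/(2σ)}, μ_α ≤ C' h^{|α|}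 (α!)^{−1/(2σ)}, and |a₀(α,β)| ≤ C' e^{−c(|α|+|β|)}. (Hence the operator with matrix a factorizes as Λ₂ ∘ A₀ ∘ Λ₁ with Λ₁, Λ₂ positive diagonal operators whose diagonal kernels lie in the class 𝓗_{♭_{2σ}}, and A₀ with kernel in the class 𝓗_{1/2}.) -/
/-- `|α| = α₁ + ⋯ + α_d`. -/
def msznat {d : ℕ} (α : Fin d → ℕ) : ℕ := ∑ i, α i

/-- `α! = α₁!⋯α_d!` as a real number. -/
noncomputable def mfact {d : ℕ} (α : Fin d → ℕ) : ℝ := ∏ i, (Nat.factorial (α i) : ℝ)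

lemma mfact_pos {d : ℕ} (α : Fin d → ℕ) : 0 < mfact α :=
  Finset.prod_pos fun i _ => by exact_mod_cast (α i).factorial_pos

/-- Factorization of a matrix of class `𝓗_{♭_σ}`: if
`|a(α,β)| ≤ C R^{|α|+|β|} (α!β!)^{-1/(2σ)}`, then `a(α,β) = μ_α · a₀(α,β) · λ_β` where the
strictly positive diagonals satisfy `λ_β ≤ C' h^{|β|} (β!)^{-1/(2σ)}`,
`μ_α ≤ C' h^{|α|} (α!)^{-1/(2σ)}` (class `𝓗_{♭_{2σ}}` diagonal kernels), and
`|a₀(α,β)| ≤ C' e^{-c(|α|+|β|)}` (class `𝓗_{1/2}`). -/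
theorem stmt7
    (σ : ℝ) (hσ : 0 < σ) (d₁ d₂ : ℕ) (hd₁ : 1 ≤ d₁) (hd₂ : 1 ≤ d₂)
    (a : (Fin d₂ → ℕ) → (Fin d₁ → ℕ) → ℂ)
    (ha : ∃ C > (0:ℝ), ∃ R > (0:ℝ), ∀ (α : Fin d₂ → ℕ) (β : Fin d₁ → ℕ),
      ‖a α β‖ ≤ C * R ^ (msznat α + msznat β) * (mfact α * mfact β) ^ (-(1/(2*σ)))) :
    ∃ C' > (0:ℝ), ∃ h > (0:ℝ), ∃ c > (0:ℝ),
    ∃ lam : (Fin d₁ → ℕ) → ℝ, ∃ mu : (Fin d₂ → ℕ) → ℝ,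
    ∃ a₀ : (Fin d₂ → ℕ) → (Fin d₁ → ℕ) → ℂ,
      (∀ β, 0 < lam β) ∧ (∀ α, 0 < mu α) ∧
      (∀ (α : Fin d₂ → ℕ) (β : Fin d₁ → ℕ),
        a α β = (mu α : ℂ) * a₀ α β * (lam β : ℂ)) ∧
      (∀ β : Fin d₁ → ℕ, lam β ≤ C' * h ^ msznat β * mfact β ^ (-(1/(2*σ)))) ∧
      (∀ α : Fin d₂ → ℕ, mu α ≤ C' * h ^ msznat α * mfact α ^ (-(1/(2*σ)))) ∧
      (∀ (α : Fin d₂ → ℕ) (β : Fin d₁ → ℕ),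
        ‖a₀ α β‖ ≤ C' * Real.exp (-(c * (msznat α + msznat β : ℕ)))) := by
  obtain ⟨C, hC, R, hR, hbound⟩ := ha
  set s : ℝ := -(1/(2*σ)) with hs
  set h : ℝ := R * Real.exp 1 with hh
  have hh0 : 0 < h := by positivity
  set lam : (Fin d₁ → ℕ) → ℝ := fun β => h ^ msznat β * mfact β ^ s with hlam
  set mu : (Fin d₂ → ℕ) → ℝ := fun α => h ^ msznat α * mfact α ^ s with hmu
  have hlam0 : ∀ β, 0 < lam β := fun β => by
    have := mfact_pos β; positivity
  have hmu0 : ∀ α, 0 < mu α := fun α => by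
    have := mfact_pos α; positivity
  have hC1 : (0:ℝ) < max C 1 := lt_of_lt_of_le one_pos (le_max_right _ _)
  refine ⟨max C 1, hC1, h, hh0, 1, one_pos, lam, mu,
    fun α β => a α β / (((mu α * lam β : ℝ) : ℂ)), hlam0, hmu0, ?_, ?_, ?_, ?_⟩
  · intro α β
    have hz : ((mu α * lam β : ℝ) : ℂ) ≠ 0 := by
      exact_mod_cast (mul_pos (hmu0 α) (hlam0 β)).ne'
    push_cast at hz ⊢
    field_simp
    field_simp [left_ne_zero_of_mul hz, right_ne_zero_of_mul hz]
  · intro β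
    calc lam β = 1 * (h ^ msznat β * mfact β ^ s) := by ring
      _ ≤ max C 1 * (h ^ msznat β * mfact β ^ s) := by
          have := mfact_pos β
          have h1 : (0:ℝ) ≤ h ^ msznat β * mfact β ^ s := by positivity
          exact mul_le_mul_of_nonneg_right (le_max_right _ _) h1
      _ = max C 1 * h ^ msznat β * mfact β ^ s := by ring
  · intro α
    calc mu α = 1 * (h ^ msznat α * mfact α ^ s) := by ring
      _ ≤ max C 1 * (h ^ msznat α * mfact α ^ s) := by
          have := mfact_pos α
          have h1 : (0:ℝ) ≤ h ^ msznat α * mfact α ^ s := by positivity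
          exact mul_le_mul_of_nonneg_right (le_max_right _ _) h1
      _ = max C 1 * h ^ msznat α * mfact α ^ s := by ring
  · intro α β
    set n : ℕ := msznat α + msznat β with hn
    have hz : (0:ℝ) < mu α * lam β := mul_pos (hmu0 α) (hlam0 β)
    rw [norm_div, Complex.norm_real, Real.norm_of_nonneg hz.le, div_le_iff₀ hz]
    have hmm : (mfact α * mfact β) ^ s = mfact α ^ s * mfact β ^ s :=
      Real.mul_rpow (mfact_pos α).le (mfact_pos β).le
    have hexp : (Real.exp 1) ^ n = Real.exp n := by
      rw [← Real.exp_nat_mul, mul_one]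
    have hkey : Real.exp (-(1 * (n:ℝ))) * h ^ n = R ^ n := by
      rw [hh, mul_pow, hexp, one_mul, ← mul_assoc, mul_comm (Real.exp (-(n:ℝ))),
        mul_assoc, ← Real.exp_add]
      simp
    calc ‖a α β‖ ≤ C * R ^ n * (mfact α * mfact β) ^ s := hbound α β
      _ ≤ max C 1 * R ^ n * (mfact α * mfact β) ^ s := by
          have hR' : (0:ℝ) ≤ R ^ n * (mfact α * mfact β) ^ s := by
            have := mul_pos (mfact_pos α) (mfact_pos β)
            positivity
          calc C * R ^ n * (mfact α * mfact β) ^ s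
              = C * (R ^ n * (mfact α * mfact β) ^ s) := by ring
            _ ≤ max C 1 * (R ^ n * (mfact α * mfact β) ^ s) :=
                mul_le_mul_of_nonneg_right (le_max_left _ _) hR'
            _ = max C 1 * R ^ n * (mfact α * mfact β) ^ s := by ring
      _ = max C 1 * Real.exp (-(1 * (n:ℕ))) * (mu α * lam β) := by
          rw [hmm, hmu, hlam]
          push_cast
          rw [← hkey]
          rw [show h ^ msznat α * mfact α ^ s * (h ^ msznat β * mfact β ^ s)
              = (h ^ msznat α * h ^ msznat β) * (mfact α ^ s * mfact β ^ s) by ring,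
            ← pow_add]
          ring
end

section
/- Let σ > 0 and d₁, d₂ ≥ 1, and let a : ℕ^{d₂} × ℕ^{d₁} → ℂ satisfy: for every ε > 0 there is C_ε > 0 with |a(α,β)| ≤ C_ε ε^{|α|+|β|} (α! β!)^{−1/(2σ)} for all α, β. Then there exist strictly positive families (λ_β)_{β∈ℕ^{d₁}} and (μ_α)_{α∈ℕ^{d₂}} and a matrix a₀ : ℕ^{d₂} × ℕ^{d₁} → ℂ, such that a(α,β) = μ_α · a₀(α,β) · λ_β for all α, β, and such that: for every ε > 0 there is C_ε' > 0 with λ_β ≤ C_ε' ε^{|β|} (β!)^{−1/(2σ)} and μ_α ≤ C_ε' ε^{|α|} (α!)^{−1/(2σ)}, and for every c > 0 there is C_c > 0 with |a₀(α,β)| ≤ C_c e^{−c(|α|+|β|)}. (Hence the operator with matrix a factorizes as Λ₂ ∘ A₀ ∘ Λ₁ with Λ₁, Λ₂ positive diagonal operators whose diagonal kernels lie in the class 𝓗_{0,♭_{2σ}}, and A₀ with kernel in the class 𝓗_{0,1/2}.) -/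
/-- Factorization of a matrix of class `𝓗_{0,♭_σ}`: if for every `ε > 0`
one has `|a(α,β)| ≤ C_ε ε^{|α|+|β|} (α!β!)^{-1/(2σ)}`, then `a(α,β) = μ_α · a₀(α,β) · λ_β`
where the strictly positive diagonals satisfy, for every `ε > 0`,
`λ_β ≤ C_ε' ε^{|β|} (β!)^{-1/(2σ)}` and `μ_α ≤ C_ε' ε^{|α|} (α!)^{-1/(2σ)}`
(class `𝓗_{0,♭_{2σ}}` diagonal kernels), and for every `c > 0`,
`|a₀(α,β)| ≤ C_c e^{-c(|α|+|β|)}` (class `𝓗_{0,1/2}`). -/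
theorem stmt8
    (σ : ℝ) (hσ : 0 < σ) (d₁ d₂ : ℕ) (hd₁ : 1 ≤ d₁) (hd₂ : 1 ≤ d₂)
    (a : (Fin d₂ → ℕ) → (Fin d₁ → ℕ) → ℂ)
    (ha : ∀ ε > (0:ℝ), ∃ C > (0:ℝ), ∀ (α : Fin d₂ → ℕ) (β : Fin d₁ → ℕ),
      ‖a α β‖ ≤ C * ε ^ (msznat α + msznat β) * (mfact α * mfact β) ^ (-(1/(2*σ)))) :
    ∃ lam : (Fin d₁ → ℕ) → ℝ, ∃ mu : (Fin d₂ → ℕ) → ℝ,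
    ∃ a₀ : (Fin d₂ → ℕ) → (Fin d₁ → ℕ) → ℂ,
      (∀ β, 0 < lam β) ∧ (∀ α, 0 < mu α) ∧
      (∀ (α : Fin d₂ → ℕ) (β : Fin d₁ → ℕ),
        a α β = (mu α : ℂ) * a₀ α β * (lam β : ℂ)) ∧
      (∀ ε > (0:ℝ), ∃ C' > (0:ℝ),
        (∀ β : Fin d₁ → ℕ, lam β ≤ C' * ε ^ msznat β * mfact β ^ (-(1/(2*σ)))) ∧
        (∀ α : Fin d₂ → ℕ, mu α ≤ C' * ε ^ msznat α * mfact α ^ (-(1/(2*σ))))) ∧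
      (∀ c > (0:ℝ), ∃ C > (0:ℝ), ∀ (α : Fin d₂ → ℕ) (β : Fin d₁ → ℕ),
        ‖a₀ α β‖ ≤ C * Real.exp (-(c * (msznat α + msznat β : ℕ)))) := by
  classical
  choose C₀ hC₀pos hC₀ using fun j : ℕ => ha (Real.exp (-((j:ℝ)+1))) (Real.exp_pos _)
  set C : ℕ → ℝ := fun j => 1 + ∑ i ∈ Finset.range (j+1), C₀ i with hCdef
  have hC1 : ∀ j, 1 ≤ C j := fun j =>
    le_add_of_nonneg_right (Finset.sum_nonneg fun i _ => (hC₀pos i).le)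
  have hCpos : ∀ j, 0 < C j := fun j => lt_of_lt_of_le one_pos (hC1 j)
  have hC₀C : ∀ j, C₀ j ≤ C j := by
    intro j
    have h1 : C₀ j ≤ ∑ i ∈ Finset.range (j+1), C₀ i :=
      Finset.single_le_sum (fun i _ => (hC₀pos i).le) (Finset.self_mem_range_succ j)
    simp only [hCdef]
    linarith
  have hCbound : ∀ (j : ℕ) (α : Fin d₂ → ℕ) (β : Fin d₁ → ℕ),
      ‖a α β‖ ≤ C j * Real.exp (-(((j:ℝ)+1) * (msznat α + msznat β))) *
        (mfact α * mfact β) ^ (-(1/(2*σ))) := by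
    intro j α β
    have h1 := hC₀ j α β
    have h2 : Real.exp (-((j:ℝ)+1)) ^ (msznat α + msznat β)
        = Real.exp (-(((j:ℝ)+1) * (msznat α + msznat β))) := by
      rw [← Real.exp_nat_mul]
      congr 1
      push_cast
      ring
    rw [h2] at h1
    refine h1.trans ?_
    have h3 : (0:ℝ) ≤ Real.exp (-(((j:ℝ)+1) * (msznat α + msznat β))) := (Real.exp_pos _).le
    have h4 : (0:ℝ) ≤ (mfact α * mfact β) ^ (-(1/(2*σ))) :=
      Real.rpow_nonneg (mul_nonneg (mfact_pos α).le (mfact_pos β).le) _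
    exact mul_le_mul_of_nonneg_right (mul_le_mul_of_nonneg_right (hC₀C j) h3) h4
  -- the index function N
  set N : ℕ → ℕ := fun n => Nat.findGreatest (fun j => C j ≤ Real.exp n) n with hNdef
  have hNmono : Monotone N := by
    intro n n' h
    exact Nat.findGreatest_mono
      (fun j hj => hj.trans (Real.exp_le_exp.mpr (by exact_mod_cast h))) h
  have hNspec : ∀ n : ℕ, C (N n) ≤ C 0 * Real.exp n := by
    intro n
    rcases Nat.eq_zero_or_pos (N n) with h0 | hpos
    · rw [h0]
      have h1 : (1:ℝ) ≤ Real.exp n := Real.one_le_exp (by positivity)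
      nlinarith [hCpos 0]
    · have := Nat.findGreatest_of_ne_zero (rfl : N n = N n) (Nat.pos_iff_ne_zero.mp hpos)
      have h1 : (1:ℝ) ≤ C 0 := hC1 0
      have h2 : (0:ℝ) < Real.exp n := Real.exp_pos _
      nlinarith
  have hNlarge : ∀ M : ℕ, ∃ n₀ : ℕ, ∀ n, n₀ ≤ n → M ≤ N n := by
    intro M
    refine ⟨max M ⌈Real.log (C M)⌉₊, fun n hn => ?_⟩
    apply Nat.le_findGreatest (le_trans (le_max_left _ _) hn)
    have h1 : Real.log (C M) ≤ (n:ℝ) := by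
      calc Real.log (C M) ≤ (⌈Real.log (C M)⌉₊ : ℝ) := Nat.le_ceil _
        _ ≤ (n:ℝ) := by exact_mod_cast le_trans (le_max_right M _) hn
    calc C M = Real.exp (Real.log (C M)) := (Real.exp_log (hCpos M)).symm
      _ ≤ Real.exp n := Real.exp_le_exp.mpr h1
  -- key decay estimate for the diagonal weight
  have hkey : ∀ ε : ℝ, 0 < ε → ∃ C' : ℝ, 0 < C' ∧ 1 ≤ C' ∧
      ∀ k : ℕ, Real.exp (-((k:ℝ) * (N k : ℝ)) / 2) ≤ C' * ε ^ k := by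
    intro ε hε
    obtain ⟨n₀, hn₀⟩ := hNlarge (⌈2 * |Real.log ε|⌉₊)
    set M : ℕ := ⌈2 * |Real.log ε|⌉₊ with hMdef
    have hexpM : Real.exp (-(M:ℝ) / 2) ≤ ε := by
      rw [← Real.exp_log hε]
      apply Real.exp_le_exp.mpr
      have h1 : 2 * |Real.log ε| ≤ (M:ℝ) := Nat.le_ceil _
      have h2 : -Real.log ε ≤ |Real.log ε| := neg_le_abs _
      linarith
    refine ⟨1 + ∑ k ∈ Finset.range n₀, Real.exp (-((k:ℝ) * (N k : ℝ)) / 2) * ε⁻¹ ^ k,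
      by positivity, le_add_of_nonneg_right (Finset.sum_nonneg fun i _ => by positivity), ?_⟩
    set C' : ℝ := 1 + ∑ k ∈ Finset.range n₀, Real.exp (-((k:ℝ) * (N k : ℝ)) / 2) * ε⁻¹ ^ k
      with hC'def
    intro k
    by_cases hk : k < n₀
    · have hterm : Real.exp (-((k:ℝ) * (N k : ℝ)) / 2) * ε⁻¹ ^ k ≤ C' := by
        have h1 := Finset.single_le_sum
          (f := fun i : ℕ => Real.exp (-((i:ℝ) * (N i : ℝ)) / 2) * ε⁻¹ ^ i)
          (fun i _ => by positivity) (Finset.mem_range.mpr hk)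
        simp only [hC'def]
        linarith
      have h2 : Real.exp (-((k:ℝ) * (N k : ℝ)) / 2)
          = (Real.exp (-((k:ℝ) * (N k : ℝ)) / 2) * ε⁻¹ ^ k) * ε ^ k := by
        field_simp
        rw [one_div, inv_pow, inv_mul_cancel₀ (pow_ne_zero k hε.ne')]
      rw [h2]
      exact mul_le_mul_of_nonneg_right hterm (by positivity)
    · push_neg at hk
      have hM := hn₀ k hk
      have h1 : Real.exp (-((k:ℝ) * (N k : ℝ)) / 2) ≤ Real.exp (-(M:ℝ) / 2) ^ k := by
        rw [← Real.exp_nat_mul]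
        apply Real.exp_le_exp.mpr
        have h2 : (M:ℝ) ≤ (N k : ℝ) := by exact_mod_cast hM
        have h3 : (0:ℝ) ≤ (k:ℝ) := by positivity
        nlinarith
      have hC'1 : (1:ℝ) ≤ C' :=
        le_add_of_nonneg_right (Finset.sum_nonneg fun i _ => by positivity)
      calc Real.exp (-((k:ℝ) * (N k : ℝ)) / 2) ≤ Real.exp (-(M:ℝ) / 2) ^ k := h1
        _ ≤ ε ^ k := pow_le_pow_left₀ (Real.exp_pos _).le hexpM k
        _ ≤ C' * ε ^ k := le_mul_of_one_le_left (by positivity) hC'1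
  -- the diagonal weights and factor matrix
  refine ⟨fun β => Real.exp (-((msznat β : ℝ) * (N (msznat β) : ℝ)) / 2)
      * mfact β ^ (-(1/(2*σ))),
    fun α => Real.exp (-((msznat α : ℝ) * (N (msznat α) : ℝ)) / 2)
      * mfact α ^ (-(1/(2*σ))),
    fun α β => a α β / (((Real.exp (-((msznat α : ℝ) * (N (msznat α) : ℝ)) / 2)
        * mfact α ^ (-(1/(2*σ))) : ℝ) : ℂ)
      * ((Real.exp (-((msznat β : ℝ) * (N (msznat β) : ℝ)) / 2)
        * mfact β ^ (-(1/(2*σ))) : ℝ) : ℂ)), ?_, ?_, ?_, ?_, ?_⟩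
  · intro β
    have := mfact_pos β
    positivity
  · intro α
    have := mfact_pos α
    positivity
  · intro α β
    have hmu : ((Real.exp (-((msznat α : ℝ) * (N (msznat α) : ℝ)) / 2)
        * mfact α ^ (-(1/(2*σ))) : ℝ) : ℂ) ≠ 0 := by
      have := mfact_pos α
      exact_mod_cast Complex.ofReal_ne_zero.mpr (by positivity)
    have hlam : ((Real.exp (-((msznat β : ℝ) * (N (msznat β) : ℝ)) / 2)
        * mfact β ^ (-(1/(2*σ))) : ℝ) : ℂ) ≠ 0 := by
      have := mfact_pos β
      exact_mod_cast Complex.ofReal_ne_zero.mpr (by positivity)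
    have key : ∀ (x y z : ℂ), x ≠ 0 → y ≠ 0 → z = x * (z / (x * y)) * y := by
      intro x y z hx hy
      field_simp
    exact key _ _ _ hmu hlam
  · intro ε hε
    obtain ⟨C', hC'pos, _, hC'⟩ := hkey ε hε
    refine ⟨C', hC'pos, fun β => ?_, fun α => ?_⟩
    · show Real.exp (-((msznat β : ℝ) * (N (msznat β) : ℝ)) / 2) * mfact β ^ (-(1/(2*σ)))
        ≤ C' * ε ^ msznat β * mfact β ^ (-(1/(2*σ)))
      have h1 := mul_le_mul_of_nonneg_right (hC' (msznat β))
        (Real.rpow_nonneg (mfact_pos β).le (-(1/(2*σ))))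
      linarith [h1]
    · show Real.exp (-((msznat α : ℝ) * (N (msznat α) : ℝ)) / 2) * mfact α ^ (-(1/(2*σ)))
        ≤ C' * ε ^ msznat α * mfact α ^ (-(1/(2*σ)))
      have h1 := mul_le_mul_of_nonneg_right (hC' (msznat α))
        (Real.rpow_nonneg (mfact_pos α).le (-(1/(2*σ))))
      linarith [h1]
  · intro c hc
    obtain ⟨C₂, hC₂pos, _, hC₂⟩ := hkey (Real.exp (-c)) (Real.exp_pos _)
    refine ⟨C 0 * C₂, mul_pos (hCpos 0) hC₂pos, ?_⟩
    intro α β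
    simp only []
    set n := msznat α with hn
    set m := msznat β with hm
    set k := n + m with hk
    have hFα : (0:ℝ) < mfact α ^ (-(1/(2*σ))) := Real.rpow_pos_of_pos (mfact_pos α) _
    have hFβ : (0:ℝ) < mfact β ^ (-(1/(2*σ))) := Real.rpow_pos_of_pos (mfact_pos β) _
    set muα : ℝ := Real.exp (-((n : ℝ) * (N n : ℝ)) / 2) * mfact α ^ (-(1/(2*σ))) with hmuα
    set lamβ : ℝ := Real.exp (-((m : ℝ) * (N m : ℝ)) / 2) * mfact β ^ (-(1/(2*σ))) with hlamβ
    have hmuαpos : 0 < muα := by rw [hmuα]; positivity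
    have hlamβpos : 0 < lamβ := by rw [hlamβ]; positivity
    have hnorm : ‖a α β / ((muα : ℂ) * (lamβ : ℂ))‖ = ‖a α β‖ / (muα * lamβ) := by
      rw [norm_div, norm_mul, Complex.norm_real, Complex.norm_real,
        Real.norm_of_nonneg hmuαpos.le, Real.norm_of_nonneg hlamβpos.le]
    rw [hnorm, div_le_iff₀ (by positivity)]
    -- main scalar estimate
    have hb := hCbound (N k) α β
    have hsplit : (mfact α * mfact β) ^ (-(1/(2*σ)))
        = mfact α ^ (-(1/(2*σ))) * mfact β ^ (-(1/(2*σ))) :=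
      Real.mul_rpow (mfact_pos α).le (mfact_pos β).le
    rw [hsplit] at hb
    have h2 := hC₂ k
    rw [← Real.exp_nat_mul] at h2
    have hmono1 : (n:ℝ) * (N n : ℝ) + (m:ℝ) * (N m : ℝ) ≤ (k:ℝ) * (N k : ℝ) := by
      have e1 : (N n : ℝ) ≤ (N k : ℝ) := by exact_mod_cast hNmono (by omega : n ≤ k)
      have e2 : (N m : ℝ) ≤ (N k : ℝ) := by exact_mod_cast hNmono (by omega : m ≤ k)
      have e3 : (0:ℝ) ≤ (n:ℝ) := by positivity
      have e4 : (0:ℝ) ≤ (m:ℝ) := by positivity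
      have e5 : (k:ℝ) = (n:ℝ) + (m:ℝ) := by rw [hk]; push_cast; ring
      nlinarith
    have hscal : C (N k) * Real.exp (-(((N k : ℝ)+1) * (n + m)))
        ≤ C 0 * C₂ * Real.exp (-(c * (k:ℕ)))
          * (Real.exp (-((n : ℝ) * (N n : ℝ)) / 2) * Real.exp (-((m : ℝ) * (N m : ℝ)) / 2)) := by
      have hA : C (N k) * Real.exp (-(((N k : ℝ)+1) * (n + m)))
          ≤ (C 0 * Real.exp k) * Real.exp (-(((N k : ℝ)+1) * (n + m))) :=
        mul_le_mul_of_nonneg_right (hNspec k) (Real.exp_pos _).le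
      have hB : (C 0 * Real.exp k) * Real.exp (-(((N k : ℝ)+1) * (n + m)))
          = C 0 * (Real.exp (-((k:ℝ) * (N k : ℝ)) / 2) * Real.exp (-((k:ℝ) * (N k : ℝ)) / 2)) := by
        have e5 : ((n:ℝ) + (m:ℝ)) = (k:ℝ) := by rw [hk]; push_cast; ring
        rw [mul_assoc, ← Real.exp_add, ← Real.exp_add, e5]
        congr 1
        rw [Real.exp_eq_exp]
        ring
      have hD : Real.exp (-((k:ℝ) * (N k : ℝ)) / 2)
          ≤ Real.exp (-((n : ℝ) * (N n : ℝ)) / 2) * Real.exp (-((m : ℝ) * (N m : ℝ)) / 2) := by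
        rw [← Real.exp_add]
        apply Real.exp_le_exp.mpr
        linarith
      have h2' : Real.exp (-((k:ℝ) * (N k : ℝ)) / 2) ≤ C₂ * Real.exp (-(c * (k:ℕ))) := by
        have e6 : -(c * ((k:ℕ):ℝ)) = ((k:ℕ):ℝ) * -c := by ring
        rw [e6]
        exact h2
      calc C (N k) * Real.exp (-(((N k : ℝ)+1) * (n + m)))
          ≤ C 0 * (Real.exp (-((k:ℝ) * (N k : ℝ)) / 2) * Real.exp (-((k:ℝ) * (N k : ℝ)) / 2)) := by
            rw [← hB]; exact hA
        _ ≤ C 0 * ((C₂ * Real.exp (-(c * (k:ℕ))))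
              * (Real.exp (-((n : ℝ) * (N n : ℝ)) / 2) * Real.exp (-((m : ℝ) * (N m : ℝ)) / 2))) := by
            apply mul_le_mul_of_nonneg_left _ (hCpos 0).le
            exact mul_le_mul h2' hD (Real.exp_pos _).le (by positivity)
        _ = C 0 * C₂ * Real.exp (-(c * (k:ℕ)))
              * (Real.exp (-((n : ℝ) * (N n : ℝ)) / 2) * Real.exp (-((m : ℝ) * (N m : ℝ)) / 2)) := by
            ring
    refine hb.trans ?_
    have hfinal := mul_le_mul_of_nonneg_right hscal
      (by positivity : (0:ℝ) ≤ mfact α ^ (-(1/(2*σ))) * mfact β ^ (-(1/(2*σ))))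
    calc C (N k) * Real.exp (-(((N k : ℝ)+1) * (↑n + ↑m)))
          * (mfact α ^ (-(1/(2*σ))) * mfact β ^ (-(1/(2*σ))))
        ≤ (C 0 * C₂ * Real.exp (-(c * (k:ℕ)))
            * (Real.exp (-((n : ℝ) * (N n : ℝ)) / 2) * Real.exp (-((m : ℝ) * (N m : ℝ)) / 2)))
          * (mfact α ^ (-(1/(2*σ))) * mfact β ^ (-(1/(2*σ)))) := hfinal
      _ = C 0 * C₂ * Real.exp (-(c * (k:ℕ))) * (muα * lamβ) := by
          rw [hmuα, hlamβ]; ring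
end

section
/- Let s > 0 and d ≥ 1, and let T : ℓ²(ℕ^d) → ℓ²(ℕ^d) be the bounded diagonal operator with T e_α = c_α e_α for all α ∈ ℕ^d, where the eigenvalues satisfy 0 ≤ c_α ≤ C e^{−r|α|^{1/(2s)}} for some C, r > 0. Then there exist C', c' > 0 such that σ_k(T) ≤ C' e^{−c' k^{1/(2ds)}} for every k ≥ 1. -/
open scoped ENNReal

noncomputable def evalCLM {ι : Type*} (β : ι) : lp (fun _ : ι => ℂ) 2 →L[ℂ] ℂ :=
  LinearMap.mkContinuous
    { toFun := fun f => f β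
      map_add' := fun f g => rfl
      map_smul' := fun a f => rfl } 1
    (fun f => by
      rw [one_mul]; exact lp.norm_apply_le_norm (p := 2) (by norm_num) f β)

noncomputable def cutoff {ι : Type*} [DecidableEq ι] (c : ι → ℝ) (S : Finset ι) :
    lp (fun _ : ι => ℂ) 2 →L[ℂ] lp (fun _ : ι => ℂ) 2 :=
  ∑ α ∈ S, (c α : ℂ) •
    ((ContinuousLinearMap.toSpanSingleton ℂ (lp.single 2 α (1:ℂ))).comp (evalCLM α))

lemma cutoff_eq {ι : Type*} [DecidableEq ι] (c : ι → ℝ) (S : Finset ι)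
    (f : lp (fun _ : ι => ℂ) 2) :
    cutoff c S f = ∑ α ∈ S, (c α : ℂ) • ((f α) • lp.single 2 α (1:ℂ)) := by
  rw [cutoff, ContinuousLinearMap.sum_apply]
  rfl

lemma cutoff_apply {ι : Type*} [DecidableEq ι] (c : ι → ℝ) (S : Finset ι)
    (f : lp (fun _ : ι => ℂ) 2) (β : ι) :
    cutoff c S f β = if β ∈ S then (c β : ℂ) * f β else 0 := by
  have h2 : cutoff c S f β
      = ∑ α ∈ S, (c α : ℂ) * ((f α) * lp.single (E := fun _ : ι => ℂ) 2 α (1:ℂ) β) := by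
    rw [cutoff_eq, lp.coeFn_sum, Finset.sum_apply]
    rfl
  rw [h2]
  by_cases hβ : β ∈ S
  · rw [Finset.sum_eq_single_of_mem β hβ]
    · rw [if_pos hβ, lp.single_apply_self]; ring
    · intro α hα hne
      rw [lp.single_apply_ne 2 α _ (Ne.symm hne)]; ring
  · rw [if_neg hβ]
    apply Finset.sum_eq_zero
    intro α hα
    rw [lp.single_apply_ne 2 α _ (fun h => hβ (by rw [h]; exact hα))]; ring

lemma cutoff_rank {ι : Type*} [DecidableEq ι] (c : ι → ℝ) (S : Finset ι) :
    Module.rank ℂ (LinearMap.range ((cutoff c S : lp (fun _ : ι => ℂ) 2 →L[ℂ]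
      lp (fun _ : ι => ℂ) 2) : lp (fun _ : ι => ℂ) 2 →ₗ[ℂ] lp (fun _ : ι => ℂ) 2)) ≤ S.card := by
  set g : ι → lp (fun _ : ι => ℂ) 2 := fun α => lp.single 2 α (1:ℂ) with hg
  have hle : LinearMap.range ((cutoff c S : lp (fun _ : ι => ℂ) 2 →L[ℂ]
      lp (fun _ : ι => ℂ) 2) : lp (fun _ : ι => ℂ) 2 →ₗ[ℂ] lp (fun _ : ι => ℂ) 2)
      ≤ Submodule.span ℂ (g '' (S : Set ι)) := by
    rintro x ⟨f, rfl⟩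
    show cutoff c S f ∈ _
    rw [cutoff_eq]
    apply Submodule.sum_mem
    intro α hα
    apply Submodule.smul_mem
    apply Submodule.smul_mem
    exact Submodule.subset_span ⟨α, hα, rfl⟩
  calc Module.rank ℂ (LinearMap.range _)
      ≤ Module.rank ℂ (Submodule.span ℂ (g '' (S : Set ι))) := Submodule.rank_mono hle
    _ ≤ Cardinal.mk (g '' (S : Set ι)) := rank_span_le _
    _ ≤ Cardinal.mk (S : Set ι) := Cardinal.mk_image_le
    _ = (S.card : Cardinal) := Cardinal.mk_coe_finset

lemma single_eq_smul {ι : Type*} [DecidableEq ι] (α : ι) (z : ℂ) :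
    lp.single (E := fun _ : ι => ℂ) 2 α z = z • lp.single (E := fun _ : ι => ℂ) 2 α 1 := by
  rw [← lp.single_smul, smul_eq_mul, mul_one]

lemma diag_apply {ι : Type*} [DecidableEq ι]
    (T : lp (fun _ : ι => ℂ) 2 →L[ℂ] lp (fun _ : ι => ℂ) 2) (c : ι → ℝ)
    (hdiag : ∀ α : ι, T (lp.single 2 α 1) = (c α : ℂ) • lp.single 2 α 1)
    (f : lp (fun _ : ι => ℂ) 2) (β : ι) :
    T f β = (c β : ℂ) * f β := by
  have h1 : HasSum (fun α : ι => lp.single 2 α (f α)) f :=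
    lp.hasSum_single (by norm_num) f
  have h2 : HasSum (fun α : ι => (evalCLM β) (T (lp.single 2 α (f α)))) (evalCLM β (T f)) :=
    (((evalCLM β).comp T).hasSum h1)
  have key : ∀ α : ι, (evalCLM β) (T (lp.single 2 α (f α)))
      = (f α) * (c α) * (lp.single (E := fun _ : ι => ℂ) 2 α (1:ℂ) β) := by
    intro α
    rw [single_eq_smul, map_smul, map_smul, hdiag α]
    have : (evalCLM β) ((c α : ℂ) • lp.single 2 α (1:ℂ))
        = (c α : ℂ) * (lp.single (E := fun _ : ι => ℂ) 2 α (1:ℂ) β) := rfl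
    rw [smul_eq_mul, this]; ring
  have h3 : ∀ α : ι, α ≠ β → (evalCLM β) (T (lp.single 2 α (f α))) = 0 := by
    intro α hαβ
    rw [key α, lp.single_apply_ne 2 α _ (Ne.symm hαβ), mul_zero]
  have h5 := h2.unique (hasSum_single β h3)
  rw [key β, lp.single_apply_self] at h5
  have : (evalCLM β) (T f) = T f β := rfl
  rw [this] at h5
  rw [h5]; ring

lemma diag_norm_le {ι : Type*}
    (D : lp (fun _ : ι => ℂ) 2 →L[ℂ] lp (fun _ : ι => ℂ) 2)
    (w : ι → ℝ) (ε : ℝ) (hε : 0 ≤ ε)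
    (hD : ∀ (f : lp (fun _ : ι => ℂ) 2) (β : ι), D f β = (w β : ℂ) * f β)
    (hw : ∀ β, |w β| ≤ ε) : ‖D‖ ≤ ε := by
  apply ContinuousLinearMap.opNorm_le_bound _ hε
  intro f
  have htwo : 0 < (2 : ℝ≥0∞).toReal := by norm_num
  have h1 : ‖D f‖ ^ (2:ℝ) = ∑' β, ‖(D f) β‖ ^ (2:ℝ) := by
    simpa using lp.norm_rpow_eq_tsum htwo (D f)
  have h2 : ‖f‖ ^ (2:ℝ) = ∑' β, ‖f β‖ ^ (2:ℝ) := by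
    simpa using lp.norm_rpow_eq_tsum htwo f
  have hsumf : Summable fun β => ‖f β‖ ^ (2:ℝ) := by
    simpa using (lp.memℓp f).summable htwo
  have hterm : ∀ β, ‖(D f) β‖ ^ (2:ℝ) ≤ ε ^ (2:ℝ) * ‖f β‖ ^ (2:ℝ) := by
    intro β
    rw [hD f β, ← Real.mul_rpow (by positivity) (by positivity)]
    apply Real.rpow_le_rpow (by positivity) _ (by norm_num)
    rw [norm_mul]
    apply mul_le_mul_of_nonneg_right _ (norm_nonneg _)
    simpa [Complex.norm_real] using hw β
  have hsq : ‖D f‖ ^ (2:ℝ) ≤ (ε * ‖f‖) ^ (2:ℝ) := by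
    rw [h1, Real.mul_rpow hε (norm_nonneg f), h2, ← tsum_mul_left]
    exact Summable.tsum_le_tsum hterm
      (by
        apply Summable.of_nonneg_of_le (fun β => by positivity) hterm
        exact hsumf.mul_left _)
      (hsumf.mul_left _)
  have h3 : ∀ x : ℝ, 0 ≤ x → x ^ (2:ℝ) = x ^ 2 := fun x hx => by
    rw [show (2:ℝ) = ((2:ℕ):ℝ) by norm_num, Real.rpow_natCast]
  rw [h3 _ (norm_nonneg _), h3 _ (by positivity)] at hsq
  nlinarith [norm_nonneg (D f), mul_nonneg hε (norm_nonneg f)]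

/-- The `k`-th singular value (`k ≥ 1`) of a bounded linear operator `T`:
`σ_k(T) = inf {‖T - T₀‖ : T₀ bounded linear of rank ≤ k - 1}`. -/
noncomputable def singValue {B₁ B₂ : Type*} [NormedAddCommGroup B₁] [NormedSpace ℂ B₁]
    [NormedAddCommGroup B₂] [NormedSpace ℂ B₂] (T : B₁ →L[ℂ] B₂) (k : ℕ) : ℝ :=
  sInf {r : ℝ | ∃ T₀ : B₁ →L[ℂ] B₂,
    Module.rank ℂ (LinearMap.range (T₀ : B₁ →ₗ[ℂ] B₂)) ≤ (k - 1 : ℕ) ∧ r = ‖T - T₀‖}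

/-- If `T` is the bounded diagonal operator on `ℓ²(ℕ^d)` with
`T e_α = c_α e_α` and `0 ≤ c_α ≤ C e^{-r|α|^{1/(2s)}}`, then
`σ_k(T) ≤ C' e^{-c' k^{1/(2ds)}}` for some `C', c' > 0` and all `k ≥ 1`. -/
theorem stmt10
    (s : ℝ) (hs : 0 < s) (d : ℕ) (hd : 1 ≤ d)
    (T : lp (fun _ : (Fin d → ℕ) => ℂ) 2 →L[ℂ] lp (fun _ : (Fin d → ℕ) => ℂ) 2)
    (c : (Fin d → ℕ) → ℝ)
    (hdiag : ∀ α : Fin d → ℕ, T (lp.single 2 α 1) = (c α : ℂ) • lp.single 2 α 1)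
    (C r : ℝ) (hC : 0 < C) (hr : 0 < r)
    (hc : ∀ α : Fin d → ℕ, 0 ≤ c α ∧ c α ≤ C * Real.exp (-(r * msz α ^ (1/(2*s))))) :
    ∃ C' > (0:ℝ), ∃ c' > (0:ℝ), ∀ k : ℕ, 1 ≤ k →
      singValue T k ≤ C' * Real.exp (-(c' * (k : ℝ) ^ (1/(2*(d:ℝ)*s)))) := by
  have hd0 : (0:ℝ) < d := by exact_mod_cast hd
  have hdne : (d:ℝ) ≠ 0 := ne_of_gt hd0
  set q : ℝ := (4:ℝ) ^ (1/(2*s)) with hq_def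
  have hq0 : 0 < q := Real.rpow_pos_of_pos (by norm_num) _
  refine ⟨C * Real.exp r, by positivity, r / q, by positivity, ?_⟩
  intro k hk
  have hk0 : (0:ℝ) ≤ (k:ℝ) := by positivity
  have hk1 : (1:ℝ) ≤ (k:ℝ) := by exact_mod_cast hk
  -- the cutoff parameter
  set x : ℝ := (k:ℝ) ^ (1/(d:ℝ)) with hx_def
  have hx0 : 0 ≤ x := Real.rpow_nonneg hk0 _
  have hx1 : 1 ≤ x := Real.one_le_rpow hk1 (by positivity)
  set m : ℕ := ⌊x / 2⌋₊ with hm_def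
  set S : Finset (Fin d → ℕ) := Fintype.piFinset (fun _ : Fin d => Finset.range m) with hS_def
  have hScard : S.card = m ^ d := by
    simp [hS_def, Finset.prod_const]
  -- x ^ d = k
  have hxd : x ^ d = (k:ℝ) := by
    rw [hx_def, ← Real.rpow_natCast ((k:ℝ) ^ (1/(d:ℝ))) d, ← Real.rpow_mul hk0]
    rw [show (1/(d:ℝ)) * (d:ℕ) = 1 by field_simp]
    exact Real.rpow_one _
  -- card bound : m ^ d ≤ k - 1
  have hm_le : (m:ℝ) ≤ x / 2 := Nat.floor_le (by positivity)
  have hcard_lt : m ^ d < k := by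
    have h1 : (m:ℝ) ^ d ≤ (x/2) ^ d := pow_le_pow_left₀ (by positivity) hm_le d
    have h2 : (x/2) ^ d = (k:ℝ) / 2 ^ d := by rw [div_pow, hxd]
    have h3 : (2:ℝ) ≤ 2 ^ d := by
      calc (2:ℝ) = 2 ^ 1 := (pow_one 2).symm
        _ ≤ 2 ^ d := pow_le_pow_right₀ (by norm_num) hd
    have h4 : (k:ℝ) / 2 ^ d ≤ (k:ℝ) / 2 :=
      div_le_div_of_nonneg_left hk0 (by norm_num) h3
    have h5 : (k:ℝ) / 2 < k := by linarith
    have : ((m ^ d : ℕ) : ℝ) < (k : ℝ) := by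
      push_cast
      calc (m:ℝ) ^ d ≤ (x/2)^d := h1
        _ = (k:ℝ)/2^d := h2
        _ ≤ (k:ℝ)/2 := h4
        _ < k := h5
    exact_mod_cast this
  have hcard : m ^ d ≤ k - 1 := Nat.le_pred_of_lt hcard_lt
  -- the finite-rank approximant
  set T₀ := cutoff c S with hT₀
  have hrank : Module.rank ℂ (LinearMap.range ((T₀ : lp (fun _ : (Fin d → ℕ) => ℂ) 2 →L[ℂ]
      lp (fun _ : (Fin d → ℕ) => ℂ) 2) : lp (fun _ : (Fin d → ℕ) => ℂ) 2 →ₗ[ℂ]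
      lp (fun _ : (Fin d → ℕ) => ℂ) 2)) ≤ ((k - 1 : ℕ) : Cardinal) := by
    refine le_trans (cutoff_rank c S) ?_
    rw [hScard]
    exact_mod_cast Nat.cast_le.mpr hcard
  -- singValue ≤ ‖T - T₀‖
  have hsv : singValue T k ≤ ‖T - T₀‖ := by
    apply csInf_le
    · exact ⟨0, fun y hy => by obtain ⟨T₀', _, rfl⟩ := hy; exact norm_nonneg _⟩
    · exact ⟨T₀, hrank, rfl⟩
  -- ‖T - T₀‖ ≤ ε
  set ε : ℝ := C * Real.exp (-(r * (m:ℝ) ^ (1/(2*s)))) with hε_def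
  have hε0 : 0 ≤ ε := by positivity
  have hnorm : ‖T - T₀‖ ≤ ε := by
    apply diag_norm_le _ (fun β => if β ∈ S then 0 else c β) ε hε0
    · intro f β
      have : (T - T₀) f β = T f β - T₀ f β := by
        rw [ContinuousLinearMap.sub_apply, lp.coeFn_sub, Pi.sub_apply]
      rw [this, diag_apply T c hdiag, hT₀, cutoff_apply]
      by_cases hβ : β ∈ S
      · simp [hβ]
      · simp [hβ]
    · intro β
      by_cases hβ : β ∈ S
      · simp only [hβ, if_true, abs_zero]; exact hε0
      · simp only [hβ, if_false]
        rw [abs_of_nonneg (hc β).1]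
        refine le_trans (hc β).2 ?_
        apply mul_le_mul_of_nonneg_left _ hC.le
        apply Real.exp_le_exp.mpr
        apply neg_le_neg
        apply mul_le_mul_of_nonneg_left _ hr.le
        apply Real.rpow_le_rpow (by positivity) _ (by positivity)
        -- m ≤ msz β
        have : ∃ i, ¬ β i < m := by
          by_contra h
          push_neg at h
          exact hβ (Fintype.mem_piFinset.mpr fun i => Finset.mem_range.mpr (h i))
        obtain ⟨i, hi⟩ := this
        push_neg at hi
        have h1 : m ≤ ∑ j, β j :=
          le_trans hi (Finset.single_le_sum (fun j _ => Nat.zero_le _) (Finset.mem_univ i))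
        rw [msz]
        exact_mod_cast h1
  -- ε ≤ C' e^{-c' k^{1/(2ds)}}
  have hfinal : ε ≤ (C * Real.exp r) * Real.exp (-((r/q) * (k:ℝ) ^ (1/(2*(d:ℝ)*s)))) := by
    set A : ℝ := r * (m:ℝ) ^ (1/(2*s)) with hA
    set B : ℝ := (r/q) * (k:ℝ) ^ (1/(2*(d:ℝ)*s)) with hB
    have hA0 : 0 ≤ A := by positivity
    have hBA : B ≤ A + r := by
      by_cases hk4 : (k:ℝ) ≤ 4 ^ d
      · -- small k : B ≤ r
        have h1 : (k:ℝ) ^ (1/(2*(d:ℝ)*s)) ≤ ((4:ℝ) ^ d) ^ (1/(2*(d:ℝ)*s)) :=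
          Real.rpow_le_rpow hk0 hk4 (by positivity)
        have h2 : ((4:ℝ) ^ d) ^ (1/(2*(d:ℝ)*s)) = q := by
          rw [← Real.rpow_natCast (4:ℝ) d, ← Real.rpow_mul (by norm_num)]
          rw [show (d:ℝ) * (1/(2*(d:ℝ)*s)) = 1/(2*s) by field_simp]
        have h3 : B ≤ (r/q) * q :=
          mul_le_mul_of_nonneg_left (h1.trans h2.le) (by positivity)
        rw [div_mul_cancel₀ _ (ne_of_gt hq0)] at h3
        linarith
      · -- large k : B ≤ A
        push_neg at hk4
        have hx4 : (4:ℝ) ≤ x := by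
          have h1 : ((4:ℝ) ^ d) ^ (1/(d:ℝ)) ≤ x :=
            Real.rpow_le_rpow (by positivity) hk4.le (by positivity)
          have h2 : ((4:ℝ) ^ d) ^ (1/(d:ℝ)) = 4 := by
            rw [← Real.rpow_natCast (4:ℝ) d, ← Real.rpow_mul (by norm_num)]
            rw [show (d:ℝ) * (1/(d:ℝ)) = 1 by field_simp]
            exact Real.rpow_one _
          rwa [h2] at h1
        have hm4 : x / 4 ≤ (m:ℝ) := by
          have h1 : x / 2 < m + 1 := Nat.lt_floor_add_one _
          linarith
        have h1 : (x/4) ^ (1/(2*s)) ≤ (m:ℝ) ^ (1/(2*s)) :=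
          Real.rpow_le_rpow (by positivity) hm4 (by positivity)
        have h2 : (x/4) ^ (1/(2*s)) = (k:ℝ) ^ (1/(2*(d:ℝ)*s)) / q := by
          rw [Real.div_rpow hx0 (by norm_num), hq_def, hx_def,
            ← Real.rpow_mul hk0]
          rw [show (1/(d:ℝ)) * (1/(2*s)) = 1/(2*(d:ℝ)*s) by field_simp]
        have h3 : r * ((k:ℝ) ^ (1/(2*(d:ℝ)*s)) / q) ≤ A := by
          apply mul_le_mul_of_nonneg_left _ hr.le
          rw [← h2]; exact h1
        have h4 : B = r * ((k:ℝ) ^ (1/(2*(d:ℝ)*s)) / q) := by ring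
        linarith
    rw [hε_def]
    calc C * Real.exp (-A) ≤ C * Real.exp (r - B) := by
          apply mul_le_mul_of_nonneg_left _ hC.le
          apply Real.exp_le_exp.mpr
          linarith
      _ = (C * Real.exp r) * Real.exp (-B) := by
          rw [show r - B = r + (-B) by ring, Real.exp_add]; ring
  exact le_trans hsv (le_trans hnorm hfinal)
end

section
/- Let s > 0, d₁, d₂ ≥ 1 and d = min(d₁, d₂), and let T : ℓ²(ℕ^{d₁}) → ℓ²(ℕ^{d₂}) be a bounded linear operator whose matrix satisfies, for every r > 0, |⟨T e_β, e_α⟩| ≤ C_r e^{−r(|α|^{1/(2s)} + |β|^{1/(2s)})} for some C_r > 0 and all α, β. Then for every c > 0 there exists C'_c > 0 such that σ_k(T) ≤ C'_c e^{−c k^{1/(2ds)}} for every k ≥ 1. In particular, ∑_{k=1}^∞ σ_k(T)^p < ∞ for every p > 0. -/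
set_option maxHeartbeats 1600000

open scoped ENNReal


namespace Stmt12Aux

lemma singValue_le {B₁ B₂ : Type*} [NormedAddCommGroup B₁] [NormedSpace ℂ B₁]
    [NormedAddCommGroup B₂] [NormedSpace ℂ B₂] (T T₀ : B₁ →L[ℂ] B₂) (k : ℕ)
    (h : Module.rank ℂ (LinearMap.range (T₀ : B₁ →ₗ[ℂ] B₂)) ≤ ((k - 1 : ℕ) : Cardinal)) :
    singValue T k ≤ ‖T - T₀‖ := by
  apply csInf_le
  · exact ⟨0, by rintro r ⟨T₁, -, rfl⟩; exact norm_nonneg _⟩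
  · exact ⟨T₀, h, rfl⟩

lemma singValue_nonneg {B₁ B₂ : Type*} [NormedAddCommGroup B₁] [NormedSpace ℂ B₁]
    [NormedAddCommGroup B₂] [NormedSpace ℂ B₂] (T : B₁ →L[ℂ] B₂) (k : ℕ) :
    0 ≤ singValue T k := by
  apply Real.sInf_nonneg
  rintro r ⟨T₁, -, rfl⟩
  exact norm_nonneg _

lemma summable_exp_1d {t ε : ℝ} (ht : 0 < t) (hε : 0 < ε) :
    Summable fun n : ℕ => Real.exp (-(t * (n : ℝ) ^ ε)) := by
  obtain ⟨M, hM⟩ : ∃ M : ℕ, 2 ≤ ε * M := by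
    obtain ⟨M, hM⟩ := exists_nat_ge (2 / ε)
    rw [div_le_iff₀ hε] at hM
    exact ⟨M, by linarith⟩
  set K : ℝ := max 1 (4 * (M.factorial : ℝ) / t ^ M) with hK
  have hK1 : (1:ℝ) ≤ K := le_max_left _ _
  have hK2 : 4 * (M.factorial : ℝ) / t ^ M ≤ K := le_max_right _ _
  have key : ∀ n : ℕ, Real.exp (-(t * (n : ℝ) ^ ε)) ≤ K * (1 / ((n : ℝ) + 1) ^ 2) := by
    intro n
    rcases Nat.eq_zero_or_pos n with rfl | hn
    · simp only [Nat.cast_zero, Real.zero_rpow hε.ne', mul_zero, neg_zero, Real.exp_zero]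
      rw [zero_add, one_pow]
      simpa using hK1
    · have hn1 : (1:ℝ) ≤ (n:ℝ) := by exact_mod_cast hn
      have h2 : (n:ℝ) ^ (2:ℝ) ≤ (n:ℝ) ^ (ε * M) :=
        Real.rpow_le_rpow_of_exponent_le hn1 hM
      have h3 : t ^ M * (n:ℝ) ^ (ε * M) / (M.factorial : ℝ) ≤ Real.exp (t * (n:ℝ) ^ ε) := by
        have h := Real.pow_div_factorial_le_exp
          (x := t * (n:ℝ) ^ ε) (by positivity) M
        calc t ^ M * (n:ℝ) ^ (ε * M) / (M.factorial : ℝ)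
            = (t * (n:ℝ) ^ ε) ^ M / (M.factorial : ℝ) := by
              rw [mul_pow, ← Real.rpow_natCast ((n:ℝ) ^ ε) M, ← Real.rpow_mul (by positivity)]
          _ ≤ _ := h
      have h4 : t ^ M * (n:ℝ) ^ (2:ℝ) / (M.factorial : ℝ) ≤ Real.exp (t * (n:ℝ) ^ ε) := by
        refine le_trans ?_ h3
        gcongr
      have hnr : (n:ℝ) ^ (2:ℝ) = (n:ℝ) ^ (2:ℕ) := by
        rw [← Real.rpow_natCast (n:ℝ) 2]; norm_num
      rw [hnr] at h4
      have hMf : (0:ℝ) < (M.factorial : ℝ) := by positivity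
      have htM : (0:ℝ) < t ^ M := by positivity
      rw [Real.exp_neg, inv_eq_one_div, mul_one_div,
        div_le_div_iff₀ (Real.exp_pos _) (by positivity)]
      have hfin : ((n:ℝ)+1)^2 ≤ 4 * (n:ℝ)^2 := by nlinarith
      calc 1 * ((n:ℝ)+1)^2 ≤ 4 * (n:ℝ)^2 := by linarith
        _ = (4 * (M.factorial:ℝ) / t ^ M) * (t ^ M * (n:ℝ)^2 / (M.factorial:ℝ)) := by
            field_simp
        _ ≤ K * Real.exp (t * (n:ℝ) ^ ε) := by
            apply mul_le_mul hK2 h4 (by positivity) (by positivity)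
  refine Summable.of_nonneg_of_le (fun n => (Real.exp_pos _).le) key ?_
  have h : Summable fun n : ℕ => (1 : ℝ) / ((n:ℝ) + 1) ^ 2 := by
    have := (summable_nat_add_iff 1).mpr
      (Real.summable_one_div_nat_pow.mpr (le_refl 2))
    simpa using this
  exact h.mul_left K

lemma summable_pi_prod {d : ℕ} {g : ℕ → ℝ} (hg0 : 0 ≤ g) (hg : Summable g) :
    Summable fun α : Fin d → ℕ => ∏ i, g (α i) := by
  induction d with
  | zero => exact summable_of_finite_support (Set.toFinite _)
  | succ d ih =>
    have hp : (0:(Fin d → ℕ) → ℝ) ≤ fun α => ∏ i, g (α i) :=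
      fun α => Finset.prod_nonneg fun i _ => hg0 _
    have h := Summable.mul_of_nonneg hg ih hg0 hp
    have h2 := h.comp_injective (Fin.consEquiv fun _ => ℕ).symm.injective
    refine h2.congr ?_
    intro α
    simp [Fin.consEquiv, Fin.prod_univ_succ, Fin.tail]

lemma summable_exp_msz {d : ℕ} {t ε : ℝ} (ht : 0 < t) (hε : 0 < ε) :
    Summable fun α : Fin d → ℕ => Real.exp (-(t * msz α ^ ε)) := by
  rcases Nat.eq_zero_or_pos d with rfl | hd
  · exact summable_of_finite_support (Set.toFinite _)
  have hd' : (0:ℝ) < d := by exact_mod_cast hd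
  have hprod := summable_pi_prod (d := d) (g := fun n => Real.exp (-(t / d * (n:ℝ) ^ ε)))
    (fun n => (Real.exp_pos _).le) (summable_exp_1d (by positivity) hε)
  refine Summable.of_nonneg_of_le (fun α => (Real.exp_pos _).le) ?_ hprod
  intro α
  rw [← Real.exp_sum]
  apply Real.exp_le_exp.mpr
  have key : ∑ i, (α i : ℝ) ^ ε ≤ d * msz α ^ ε := by
    have h1 : ∀ i, (α i : ℝ) ^ ε ≤ msz α ^ ε := by
      intro i
      apply Real.rpow_le_rpow (by positivity) _ hε.le
      unfold msz
      exact_mod_cast Finset.single_le_sum (f := fun i => α i) (fun _ _ => Nat.zero_le _)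
        (Finset.mem_univ i)
    calc ∑ i, (α i : ℝ) ^ ε ≤ ∑ _i : Fin d, msz α ^ ε :=
          Finset.sum_le_sum fun i _ => h1 i
      _ = d * msz α ^ ε := by simp [Finset.sum_const, nsmul_eq_mul]
  have hsum : ∑ i, -(t / d * (α i : ℝ) ^ ε) = -(t/d * ∑ i, (α i : ℝ) ^ ε) := by
    rw [Finset.mul_sum, ← Finset.sum_neg_distrib]
  rw [hsum, neg_le_neg_iff, div_mul_eq_mul_div, div_le_iff₀ hd']
  calc t * ∑ i, (α i : ℝ) ^ ε ≤ t * (d * msz α ^ ε) := by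
        apply mul_le_mul_of_nonneg_left key ht.le
    _ = t * msz α ^ ε * d := by ring

noncomputable def evCLM {I : Type} (i : I) : lp (fun _ : I => ℂ) 2 →L[ℂ] ℂ :=
  LinearMap.mkContinuous
    { toFun := fun f => f i
      map_add' := fun f g => congrFun (lp.coeFn_add f g) i
      map_smul' := fun c f => congrFun (lp.coeFn_smul c f) i }
    1 (fun f => by simpa using lp.norm_apply_le_norm (by norm_num) f i)

@[simp] lemma evCLM_apply {I : Type} (i : I) (f : lp (fun _ : I => ℂ) 2) :
    evCLM i f = f i := rfl

noncomputable def truncCLM {I : Type} [DecidableEq I] (F : Finset I) :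
    lp (fun _ : I => ℂ) 2 →L[ℂ] lp (fun _ : I => ℂ) 2 :=
  ∑ i ∈ F, (evCLM i).smulRight (lp.single 2 i 1)

lemma truncCLM_apply {I : Type} [DecidableEq I] (F : Finset I)
    (f : lp (fun _ : I => ℂ) 2) (j : I) :
    truncCLM F f j = if j ∈ F then f j else 0 := by
  have h : truncCLM F f j = evCLM j (truncCLM F f) := rfl
  rw [h, truncCLM, ContinuousLinearMap.sum_apply, map_sum]
  have h2 : ∀ i ∈ F, evCLM j ((evCLM i).smulRight (lp.single 2 i (1:ℂ)) f)
      = if j = i then f i else 0 := by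
    intro i _
    rw [ContinuousLinearMap.smulRight_apply, evCLM_apply, evCLM_apply]
    rcases eq_or_ne j i with rfl | hne
    · simp [lp.coeFn_smul, lp.single_apply_self]
    · simp [lp.coeFn_smul, lp.single_apply_ne 2 i _ hne, hne]
  rw [Finset.sum_congr rfl h2]
  simp [Finset.sum_ite_eq]

lemma truncCLM_mem_span {I : Type} [DecidableEq I] (F : Finset I)
    (f : lp (fun _ : I => ℂ) 2) :
    truncCLM F f ∈ Submodule.span ℂ ((fun i => lp.single 2 i (1:ℂ)) '' (F : Set I)) := by
  rw [truncCLM, ContinuousLinearMap.sum_apply]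
  refine Submodule.sum_mem _ fun i hi => ?_
  rw [ContinuousLinearMap.smulRight_apply]
  exact Submodule.smul_mem _ _ (Submodule.subset_span ⟨i, hi, rfl⟩)

lemma coord_bound {I₁ I₂ : Type} [DecidableEq I₁]
    (T : lp (fun _ : I₁ => ℂ) 2 →L[ℂ] lp (fun _ : I₂ => ℂ) 2)
    (C : ℝ) (g₁ : I₁ → ℝ) (g₂ : I₂ → ℝ) (hC : 0 ≤ C)
    (hg₁ : ∀ β, 0 ≤ g₁ β) (hg₂ : ∀ α, 0 ≤ g₂ α) (hs₁ : Summable g₁)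
    (hmat : ∀ α β, ‖T (lp.single 2 β 1) α‖ ≤ C * g₂ α * g₁ β)
    (y : lp (fun _ : I₁ => ℂ) 2) (α : I₂) :
    ‖T y α‖ ≤ C * g₂ α * ∑' β, ‖y β‖ * g₁ β := by
  have hnorm_sum : Summable fun β => ‖y β‖ * g₁ β := by
    refine Summable.of_nonneg_of_le (fun β => mul_nonneg (norm_nonneg _) (hg₁ β))
      (fun β => mul_le_mul_of_nonneg_right
        (lp.norm_apply_le_norm (by norm_num) y β) (hg₁ β)) (hs₁.mul_left ‖y‖)
  have hy : HasSum (fun β => lp.single 2 β (y β)) y := lp.hasSum_single (by norm_num) y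
  have hy2 : HasSum (fun β : I₁ => y β • T (lp.single 2 β (1:ℂ))) (T y) := by
    have h := hy.mapL T
    refine h.congr_fun fun β => ?_
    have heq : (lp.single 2 β (y β) : lp (fun _ : I₁ => ℂ) 2)
        = y β • lp.single 2 β (1:ℂ) := by
      rw [← lp.single_smul]; norm_num
    rw [heq, map_smul]
  have hy3 : HasSum (fun β : I₁ => y β * T (lp.single 2 β (1:ℂ)) α) (T y α) := by
    have h := hy2.mapL (evCLM α)
    refine h.congr_fun fun β => ?_
    rw [map_smul, evCLM_apply, smul_eq_mul]
  have hptwise : ∀ β, ‖y β * T (lp.single 2 β (1:ℂ)) α‖ ≤ C * g₂ α * (‖y β‖ * g₁ β) := by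
    intro β
    rw [norm_mul]
    calc ‖y β‖ * ‖T (lp.single 2 β (1:ℂ)) α‖ ≤ ‖y β‖ * (C * g₂ α * g₁ β) := by
          exact mul_le_mul_of_nonneg_left (hmat α β) (norm_nonneg _)
      _ = C * g₂ α * (‖y β‖ * g₁ β) := by ring
  have hsum_norm : Summable fun β => ‖y β * T (lp.single 2 β (1:ℂ)) α‖ :=
    Summable.of_nonneg_of_le (fun β => norm_nonneg _) hptwise
      (hnorm_sum.mul_left (C * g₂ α))
  calc ‖T y α‖ = ‖∑' β, y β * T (lp.single 2 β (1:ℂ)) α‖ := by rw [hy3.tsum_eq]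
    _ ≤ ∑' β, ‖y β * T (lp.single 2 β (1:ℂ)) α‖ := norm_tsum_le_tsum_norm hsum_norm
    _ ≤ ∑' β, C * g₂ α * (‖y β‖ * g₁ β) :=
        Summable.tsum_le_tsum hptwise hsum_norm (hnorm_sum.mul_left _)
    _ = C * g₂ α * ∑' β, ‖y β‖ * g₁ β := tsum_mul_left

lemma norm_le_sqrt_tsum {I : Type} (z : lp (fun _ : I => ℂ) 2) (h : I → ℝ)
    (hh0 : ∀ i, 0 ≤ h i) (hhs : Summable fun i => h i ^ 2) (hb : ∀ i, ‖z i‖ ≤ h i) :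
    ‖z‖ ≤ Real.sqrt (∑' i, h i ^ 2) := by
  have h2 : (0:ℝ) < (2:ℝ≥0∞).toReal := by norm_num
  have hz := lp.norm_rpow_eq_tsum h2 z
  have htr : (2:ℝ≥0∞).toReal = (2:ℝ) := by norm_num
  have hzsum : Summable fun i => ‖z i‖ ^ (2:ℝ) := by
    have h3 := (lp.hasSum_norm h2 z).summable
    rwa [htr] at h3
  have hz2 : ‖z‖ ^ (2:ℕ) = ∑' i, ‖z i‖ ^ (2:ℝ) := by
    rw [htr] at hz
    rw [← hz, ← Real.rpow_natCast ‖z‖ 2]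
    norm_num
  have hle : ∑' i, ‖z i‖ ^ (2:ℝ) ≤ ∑' i, h i ^ 2 := by
    refine Summable.tsum_le_tsum (fun i => ?_) hzsum hhs
    have h4 : ‖z i‖ ^ (2:ℝ) = ‖z i‖ ^ (2:ℕ) := by
      rw [← Real.rpow_natCast ‖z i‖ 2]; norm_num
    rw [h4]
    exact pow_le_pow_left₀ (norm_nonneg _) (hb i) 2
  calc ‖z‖ = Real.sqrt (‖z‖ ^ (2:ℕ)) := by
        rw [Real.sqrt_sq (norm_nonneg _)]
    _ ≤ Real.sqrt (∑' i, h i ^ 2) := Real.sqrt_le_sqrt (by rw [hz2]; exact hle)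

lemma sqrt_tsum_const_mul {I : Type} (B : ℝ) (hB : 0 ≤ B) (g : I → ℝ) :
    Real.sqrt (∑' i, (B * g i) ^ 2) = B * Real.sqrt (∑' i, g i ^ 2) := by
  have h : (∑' i, (B * g i) ^ 2) = B ^ 2 * ∑' i, g i ^ 2 := by
    rw [← tsum_mul_left]
    exact tsum_congr fun i => by ring
  rw [h, Real.sqrt_mul (sq_nonneg B), Real.sqrt_sq hB]

lemma rank_trunc_comp {I₁ I₂ : Type} [DecidableEq I₂]
    (T : lp (fun _ : I₁ => ℂ) 2 →L[ℂ] lp (fun _ : I₂ => ℂ) 2) (F : Finset I₂) :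
    Module.rank ℂ (LinearMap.range (((truncCLM F).comp T) : lp (fun _ : I₁ => ℂ) 2 →ₗ[ℂ] lp (fun _ : I₂ => ℂ) 2))
      ≤ (F.card : Cardinal) := by
  have hle : LinearMap.range (((truncCLM F).comp T) : lp (fun _ : I₁ => ℂ) 2 →ₗ[ℂ] lp (fun _ : I₂ => ℂ) 2) ≤
      Submodule.span ℂ ((fun i => lp.single 2 i (1:ℂ)) '' (F : Set I₂)) := by
    rintro z ⟨x, rfl⟩
    exact truncCLM_mem_span F (T x)
  refine (Submodule.rank_mono hle).trans ((rank_span_le _).trans ?_)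
  refine (Cardinal.mk_image_le).trans ?_
  simp

lemma rank_comp_trunc {I₁ I₂ : Type} [DecidableEq I₁]
    (T : lp (fun _ : I₁ => ℂ) 2 →L[ℂ] lp (fun _ : I₂ => ℂ) 2) (F : Finset I₁) :
    Module.rank ℂ (LinearMap.range ((T.comp (truncCLM F)) : lp (fun _ : I₁ => ℂ) 2 →ₗ[ℂ] lp (fun _ : I₂ => ℂ) 2))
      ≤ (F.card : Cardinal) := by
  have hle : LinearMap.range ((T.comp (truncCLM F)) : lp (fun _ : I₁ => ℂ) 2 →ₗ[ℂ] lp (fun _ : I₂ => ℂ) 2) ≤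
      Submodule.map (T : lp (fun _ : I₁ => ℂ) 2 →ₗ[ℂ] lp (fun _ : I₂ => ℂ) 2)
        (Submodule.span ℂ ((fun i => lp.single 2 i (1:ℂ)) '' (F : Set I₁))) := by
    rintro z ⟨x, rfl⟩
    exact ⟨truncCLM F x, truncCLM_mem_span F x, rfl⟩
  refine (Submodule.rank_mono hle).trans ((rank_map_le _ _).trans ?_)
  refine (rank_span_le _).trans ?_
  refine (Cardinal.mk_image_le).trans ?_
  simp

lemma caseA {I₁ I₂ : Type} [DecidableEq I₁] [DecidableEq I₂]
    (T : lp (fun _ : I₁ => ℂ) 2 →L[ℂ] lp (fun _ : I₂ => ℂ) 2)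
    (C : ℝ) (g₁ : I₁ → ℝ) (g₂ : I₂ → ℝ) (hC : 0 ≤ C)
    (hg₁ : ∀ β, 0 ≤ g₁ β) (hg₂ : ∀ α, 0 ≤ g₂ α)
    (hs₁ : Summable g₁) (hs₂ : Summable fun α => g₂ α ^ 2)
    (hmat : ∀ α β, ‖T (lp.single 2 β 1) α‖ ≤ C * g₂ α * g₁ β)
    (F : Finset I₂) :
    ∃ T₀ : lp (fun _ : I₁ => ℂ) 2 →L[ℂ] lp (fun _ : I₂ => ℂ) 2,
      Module.rank ℂ (LinearMap.range (T₀ : lp (fun _ : I₁ => ℂ) 2 →ₗ[ℂ] lp (fun _ : I₂ => ℂ) 2)) ≤ (F.card : Cardinal) ∧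
      ‖T - T₀‖ ≤ C * (∑' β, g₁ β) *
        Real.sqrt (∑' α, (if α ∈ F then 0 else g₂ α) ^ 2) := by
  classical
  have hite : ∀ α, 0 ≤ (if α ∈ F then 0 else g₂ α) := by
    intro α; split_ifs; exacts [le_refl 0, hg₂ α]
  have hS₁0 : 0 ≤ ∑' β, g₁ β := tsum_nonneg hg₁
  refine ⟨(truncCLM F).comp T, ?_, ?_⟩
  · exact rank_trunc_comp T F
  refine ContinuousLinearMap.opNorm_le_bound _
    (mul_nonneg (mul_nonneg hC hS₁0) (Real.sqrt_nonneg _)) fun x => ?_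
  have hB0 : 0 ≤ C * (∑' β, g₁ β) * ‖x‖ :=
    mul_nonneg (mul_nonneg hC hS₁0) (norm_nonneg x)
  have hxsum : Summable fun β => ‖x β‖ * g₁ β :=
    Summable.of_nonneg_of_le (fun β => mul_nonneg (norm_nonneg _) (hg₁ β))
      (fun β => mul_le_mul_of_nonneg_right
        (lp.norm_apply_le_norm (by norm_num) x β) (hg₁ β)) (hs₁.mul_left ‖x‖)
  have hxS : ∑' β, ‖x β‖ * g₁ β ≤ ‖x‖ * ∑' β, g₁ β := by
    rw [← tsum_mul_left]
    exact Summable.tsum_le_tsum (fun β => mul_le_mul_of_nonneg_right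
      (lp.norm_apply_le_norm (by norm_num) x β) (hg₁ β)) hxsum (hs₁.mul_left ‖x‖)
  have hcoord : ∀ α, ‖((T - (truncCLM F).comp T) x) α‖
      ≤ (C * (∑' β, g₁ β) * ‖x‖) * (if α ∈ F then 0 else g₂ α) := by
    intro α
    have hz : ((T - (truncCLM F).comp T) x) α = if α ∈ F then 0 else (T x) α := by
      rw [ContinuousLinearMap.sub_apply, ContinuousLinearMap.comp_apply]
      rw [congrFun (lp.coeFn_sub (T x) (truncCLM F (T x))) α]
      show (T x) α - truncCLM F (T x) α = _
      rw [truncCLM_apply]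
      split_ifs <;> simp
    rw [hz]
    split_ifs with h
    · simp
    · calc ‖(T x) α‖ ≤ C * g₂ α * ∑' β, ‖x β‖ * g₁ β :=
            coord_bound T C g₁ g₂ hC hg₁ hg₂ hs₁ hmat x α
        _ ≤ C * g₂ α * (‖x‖ * ∑' β, g₁ β) :=
            mul_le_mul_of_nonneg_left hxS (mul_nonneg hC (hg₂ α))
        _ = (C * (∑' β, g₁ β) * ‖x‖) * g₂ α := by ring
  have h1 : Summable fun α => (if α ∈ F then 0 else g₂ α) ^ 2 := by
    refine Summable.of_nonneg_of_le (fun α => sq_nonneg _) (fun α => ?_) hs₂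
    split_ifs with h
    · simpa using sq_nonneg (g₂ α)
    · exact le_refl _
  have hsummable : Summable fun α =>
      ((C * (∑' β, g₁ β) * ‖x‖) * (if α ∈ F then 0 else g₂ α)) ^ 2 :=
    (h1.mul_left ((C * (∑' β, g₁ β) * ‖x‖) ^ 2)).congr fun α => by ring
  have hb := norm_le_sqrt_tsum ((T - (truncCLM F).comp T) x)
    (fun α => (C * (∑' β, g₁ β) * ‖x‖) * (if α ∈ F then 0 else g₂ α))
    (fun α => mul_nonneg hB0 (hite α)) hsummable hcoord
  calc ‖((T - (truncCLM F).comp T)) x‖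
      ≤ Real.sqrt (∑' α, ((C * (∑' β, g₁ β) * ‖x‖) * (if α ∈ F then 0 else g₂ α)) ^ 2) := hb
    _ = (C * (∑' β, g₁ β) * ‖x‖) * Real.sqrt (∑' α, (if α ∈ F then 0 else g₂ α) ^ 2) :=
        sqrt_tsum_const_mul _ hB0 _
    _ = C * (∑' β, g₁ β) * Real.sqrt (∑' α, (if α ∈ F then 0 else g₂ α) ^ 2) * ‖x‖ := by ring

lemma caseB {I₁ I₂ : Type} [DecidableEq I₁] [DecidableEq I₂]
    (T : lp (fun _ : I₁ => ℂ) 2 →L[ℂ] lp (fun _ : I₂ => ℂ) 2)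
    (C : ℝ) (g₁ : I₁ → ℝ) (g₂ : I₂ → ℝ) (hC : 0 ≤ C)
    (hg₁ : ∀ β, 0 ≤ g₁ β) (hg₂ : ∀ α, 0 ≤ g₂ α)
    (hs₁ : Summable g₁) (hs₂ : Summable fun α => g₂ α ^ 2)
    (hmat : ∀ α β, ‖T (lp.single 2 β 1) α‖ ≤ C * g₂ α * g₁ β)
    (F : Finset I₁) :
    ∃ T₀ : lp (fun _ : I₁ => ℂ) 2 →L[ℂ] lp (fun _ : I₂ => ℂ) 2,
      Module.rank ℂ (LinearMap.range (T₀ : lp (fun _ : I₁ => ℂ) 2 →ₗ[ℂ] lp (fun _ : I₂ => ℂ) 2)) ≤ (F.card : Cardinal) ∧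
      ‖T - T₀‖ ≤ C * (∑' β, (if β ∈ F then 0 else g₁ β)) *
        Real.sqrt (∑' α, g₂ α ^ 2) := by
  classical
  have hite : ∀ β, 0 ≤ (if β ∈ F then 0 else g₁ β) := by
    intro β; split_ifs; exacts [le_refl 0, hg₁ β]
  have htails : Summable fun β => (if β ∈ F then 0 else g₁ β) := by
    refine Summable.of_nonneg_of_le hite (fun β => ?_) hs₁
    split_ifs with h
    · exact hg₁ β
    · exact le_refl _
  have ht₁0 : 0 ≤ ∑' β, (if β ∈ F then 0 else g₁ β) := tsum_nonneg hite
  refine ⟨T.comp (truncCLM F), ?_, ?_⟩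
  · exact rank_comp_trunc T F
  refine ContinuousLinearMap.opNorm_le_bound _
    (mul_nonneg (mul_nonneg hC ht₁0) (Real.sqrt_nonneg _)) fun x => ?_
  have hB0 : 0 ≤ C * (∑' β, (if β ∈ F then 0 else g₁ β)) * ‖x‖ :=
    mul_nonneg (mul_nonneg hC ht₁0) (norm_nonneg x)
  set y := x - truncCLM F x with hydef
  have happ : (T - T.comp (truncCLM F)) x = T y := by
    rw [ContinuousLinearMap.sub_apply, ContinuousLinearMap.comp_apply, ← map_sub]
  have hycoord : ∀ β, ‖y β‖ = if β ∈ F then 0 else ‖x β‖ := by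
    intro β
    rw [hydef, congrFun (lp.coeFn_sub x (truncCLM F x)) β]
    show ‖x β - truncCLM F x β‖ = _
    rw [truncCLM_apply]
    split_ifs <;> simp
  have hysum : Summable fun β => ‖y β‖ * g₁ β :=
    Summable.of_nonneg_of_le (fun β => mul_nonneg (norm_nonneg _) (hg₁ β))
      (fun β => mul_le_mul_of_nonneg_right
        (lp.norm_apply_le_norm (by norm_num) y β) (hg₁ β)) (hs₁.mul_left ‖y‖)
  have hyS : ∑' β, ‖y β‖ * g₁ β ≤ ‖x‖ * ∑' β, (if β ∈ F then 0 else g₁ β) := by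
    rw [← tsum_mul_left]
    refine Summable.tsum_le_tsum (fun β => ?_) hysum (htails.mul_left ‖x‖)
    rw [hycoord β]
    split_ifs with h
    · simp [mul_nonneg (norm_nonneg x), hg₁ β]
    · exact mul_le_mul_of_nonneg_right (lp.norm_apply_le_norm (by norm_num) x β) (hg₁ β)
  have hcoord : ∀ α, ‖((T - T.comp (truncCLM F)) x) α‖
      ≤ (C * (∑' β, (if β ∈ F then 0 else g₁ β)) * ‖x‖) * g₂ α := by
    intro α
    rw [happ]
    calc ‖T y α‖ ≤ C * g₂ α * ∑' β, ‖y β‖ * g₁ β :=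
          coord_bound T C g₁ g₂ hC hg₁ hg₂ hs₁ hmat y α
      _ ≤ C * g₂ α * (‖x‖ * ∑' β, (if β ∈ F then 0 else g₁ β)) :=
          mul_le_mul_of_nonneg_left hyS (mul_nonneg hC (hg₂ α))
      _ = (C * (∑' β, (if β ∈ F then 0 else g₁ β)) * ‖x‖) * g₂ α := by ring
  have hsummable : Summable fun α =>
      ((C * (∑' β, (if β ∈ F then 0 else g₁ β)) * ‖x‖) * g₂ α) ^ 2 :=
    (hs₂.mul_left ((C * (∑' β, (if β ∈ F then 0 else g₁ β)) * ‖x‖) ^ 2)).congr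
      fun α => by ring
  have hb := norm_le_sqrt_tsum ((T - T.comp (truncCLM F)) x)
    (fun α => (C * (∑' β, (if β ∈ F then 0 else g₁ β)) * ‖x‖) * g₂ α)
    (fun α => mul_nonneg hB0 (hg₂ α)) hsummable hcoord
  calc ‖(T - T.comp (truncCLM F)) x‖
      ≤ Real.sqrt (∑' α, ((C * (∑' β, (if β ∈ F then 0 else g₁ β)) * ‖x‖) * g₂ α) ^ 2) := hb
    _ = (C * (∑' β, (if β ∈ F then 0 else g₁ β)) * ‖x‖) * Real.sqrt (∑' α, g₂ α ^ 2) :=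
        sqrt_tsum_const_mul _ hB0 _
    _ = C * (∑' β, (if β ∈ F then 0 else g₁ β)) * Real.sqrt (∑' α, g₂ α ^ 2) * ‖x‖ := by ring

lemma tail_sq_le {I : Type} [DecidableEq I] (F : Finset I) (u : I → ℝ) (r A : ℝ) (hr : 0 < r)
    (hu : ∀ i ∉ F, A ≤ u i)
    (hsum : Summable fun i => Real.exp (-(r * u i))) :
    ∑' i, (if i ∈ F then 0 else Real.exp (-(r * u i))) ^ 2
      ≤ Real.exp (-(r * A)) * ∑' i, Real.exp (-(r * u i)) := by
  rw [← tsum_mul_left]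
  have hbound : ∀ i, (if i ∈ F then 0 else Real.exp (-(r * u i))) ^ 2
      ≤ Real.exp (-(r * A)) * Real.exp (-(r * u i)) := by
    intro i
    split_ifs with h
    · simpa using (mul_pos (Real.exp_pos _) (Real.exp_pos _)).le
    · rw [pow_two, ← Real.exp_add, ← Real.exp_add]
      apply Real.exp_le_exp.mpr
      have := hu i h
      nlinarith [hr.le]
  refine Summable.tsum_le_tsum hbound ?_ (hsum.mul_left _)
  exact Summable.of_nonneg_of_le (fun i => sq_nonneg _) hbound (hsum.mul_left _)

lemma tail_lin_le {I : Type} [DecidableEq I] (F : Finset I) (u : I → ℝ) (r A : ℝ) (hr : 0 < r)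
    (hu : ∀ i ∉ F, A ≤ u i)
    (hsum : Summable fun i => Real.exp (-(r / 2 * u i))) :
    ∑' i, (if i ∈ F then 0 else Real.exp (-(r * u i)))
      ≤ Real.exp (-(r / 2 * A)) * ∑' i, Real.exp (-(r / 2 * u i)) := by
  rw [← tsum_mul_left]
  have hbound : ∀ i, (if i ∈ F then 0 else Real.exp (-(r * u i)))
      ≤ Real.exp (-(r / 2 * A)) * Real.exp (-(r / 2 * u i)) := by
    intro i
    split_ifs with h
    · exact (mul_pos (Real.exp_pos _) (Real.exp_pos _)).le
    · rw [← Real.exp_add]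
      apply Real.exp_le_exp.mpr
      have := hu i h
      nlinarith [hr.le]
  refine Summable.tsum_le_tsum hbound ?_ (hsum.mul_left _)
  refine Summable.of_nonneg_of_le (fun i => ?_) hbound (hsum.mul_left _)
  split_ifs
  · exact le_refl 0
  · exact (Real.exp_pos _).le

lemma sqrt_exp_half (x : ℝ) : Real.sqrt (Real.exp x) = Real.exp (x / 2) := by
  rw [show x = x / 2 + x / 2 by ring, Real.exp_add,
    Real.sqrt_mul_self (Real.exp_pos _).le]
  congr 1
  ring

/-- the box of multi-indices with all coordinates `< M` -/
noncomputable def box (d M : ℕ) : Finset (Fin d → ℕ) :=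
  Fintype.piFinset fun _ => Finset.range M

lemma box_card (d M : ℕ) : (box d M).card = M ^ d := by
  simp [box]

lemma box_compl {d M : ℕ} {α : Fin d → ℕ} (h : α ∉ box d M) : (M : ℝ) ≤ msz α := by
  rw [box, Fintype.mem_piFinset] at h
  push_neg at h
  obtain ⟨i, hi⟩ := h
  rw [Finset.mem_range, not_lt] at hi
  have : M ≤ ∑ j, α j := le_trans hi (Finset.single_le_sum
    (f := fun j => α j) (fun _ _ => Nat.zero_le _) (Finset.mem_univ i))
  unfold msz
  exact_mod_cast this

lemma choose_M (d k : ℕ) (hd : 1 ≤ d) (hk : 2 ≤ k) :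
    ∃ M : ℕ, 1 ≤ M ∧ M ^ d ≤ k - 1 ∧ (k:ℝ) ^ (1/(d:ℝ)) / 4 ≤ (M:ℝ) := by
  have hd0 : (0:ℝ) < (d:ℝ) := by exact_mod_cast hd
  set m := k - 1 with hm
  have hm1 : 1 ≤ m := by omega
  have hmr : (1:ℝ) ≤ (m:ℝ) := by exact_mod_cast hm1
  set x := (m:ℝ) ^ (1/(d:ℝ)) with hx
  have hx1 : (1:ℝ) ≤ x := Real.one_le_rpow hmr (by positivity)
  refine ⟨⌊x⌋₊, Nat.le_floor (by exact_mod_cast hx1), ?_, ?_⟩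
  · -- ⌊x⌋₊ ^ d ≤ m
    have hMx : ((⌊x⌋₊ : ℕ) : ℝ) ≤ x := Nat.floor_le (by positivity)
    have hpow : ((⌊x⌋₊ : ℕ) : ℝ) ^ d ≤ x ^ d :=
      pow_le_pow_left₀ (by positivity) hMx d
    have hxd : x ^ d = (m:ℝ) := by
      rw [hx, ← Real.rpow_natCast ((m:ℝ) ^ (1/(d:ℝ))) d, ← Real.rpow_mul (by positivity)]
      rw [show 1/(d:ℝ) * (d:ℕ) = 1 by field_simp]
      exact Real.rpow_one _
    have : ((⌊x⌋₊ ^ d : ℕ) : ℝ) ≤ ((m:ℕ) : ℝ) := by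
      push_cast
      rw [← hxd]
      exact_mod_cast hpow
    exact_mod_cast this
  · -- (k:ℝ)^(1/d)/4 ≤ ⌊x⌋₊
    have hM1 : (1:ℝ) ≤ (⌊x⌋₊ : ℝ) := by
      exact_mod_cast Nat.le_floor (n := 1) (by exact_mod_cast hx1)
    have hxlt : x < (⌊x⌋₊ : ℝ) + 1 := Nat.lt_floor_add_one x
    have hx2M : x ≤ 2 * (⌊x⌋₊ : ℝ) := by linarith
    have hkr : (2:ℝ) ≤ (k:ℝ) := by exact_mod_cast hk
    have hk2m : (k:ℝ) ≤ 2 * (m:ℝ) := by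
      have : (m:ℝ) = (k:ℝ) - 1 := by
        rw [hm]
        push_cast [Nat.cast_sub (by omega : 1 ≤ k)]
        ring
      rw [this]; linarith
    have h1 : (k:ℝ) ^ (1/(d:ℝ)) ≤ (2 * (m:ℝ)) ^ (1/(d:ℝ)) :=
      Real.rpow_le_rpow (by positivity) hk2m (by positivity)
    have h2 : (2 * (m:ℝ)) ^ (1/(d:ℝ)) = (2:ℝ) ^ (1/(d:ℝ)) * x := by
      rw [hx, Real.mul_rpow (by norm_num) (by positivity)]
    have h3 : (2:ℝ) ^ (1/(d:ℝ)) ≤ 2 := by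
      calc (2:ℝ) ^ (1/(d:ℝ)) ≤ (2:ℝ) ^ (1:ℝ) := by
            apply Real.rpow_le_rpow_of_exponent_le (by norm_num)
            rw [div_le_one hd0]
            exact_mod_cast hd
        _ = 2 := Real.rpow_one 2
    have h4 : (k:ℝ) ^ (1/(d:ℝ)) ≤ 2 * x := by
      rw [h2] at h1
      calc (k:ℝ) ^ (1/(d:ℝ)) ≤ (2:ℝ) ^ (1/(d:ℝ)) * x := h1
        _ ≤ 2 * x := mul_le_mul_of_nonneg_right h3 (by linarith)
    calc (k:ℝ) ^ (1/(d:ℝ)) / 4 ≤ 2 * x / 4 := by linarith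
      _ ≤ 2 * (2 * (⌊x⌋₊:ℝ)) / 4 := by linarith
      _ = (⌊x⌋₊:ℝ) := by ring

lemma coord_eq_inner {I : Type} [DecidableEq I] (f : lp (fun _ : I => ℂ) 2) (α : I) :
    ‖(inner (𝕜 := ℂ) f (lp.single 2 α 1) : ℂ)‖ = ‖f α‖ := by
  rw [lp.inner_single_right]
  simp [RCLike.inner_apply]

lemma key_approx
    (s : ℝ) (hs : 0 < s) (d₁ d₂ : ℕ)
    (T : lp (fun _ : (Fin d₁ → ℕ) => ℂ) 2 →L[ℂ] lp (fun _ : (Fin d₂ → ℕ) => ℂ) 2)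
    (ha : ∀ r > (0:ℝ), ∃ C > (0:ℝ), ∀ (α : Fin d₂ → ℕ) (β : Fin d₁ → ℕ),
      ‖inner (𝕜 := ℂ) (T (lp.single 2 β 1)) (lp.single 2 α 1)‖
        ≤ C * Real.exp (-(r * (msz α ^ (1/(2*s)) + msz β ^ (1/(2*s))))))
    (r : ℝ) (hr : 0 < r) :
    ∃ A : ℝ, 0 ≤ A ∧ ∀ M : ℕ,
      ∃ T₀ : lp (fun _ : (Fin d₁ → ℕ) => ℂ) 2 →L[ℂ] lp (fun _ : (Fin d₂ → ℕ) => ℂ) 2,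
        Module.rank ℂ (LinearMap.range
          (T₀ : lp (fun _ : (Fin d₁ → ℕ) => ℂ) 2 →ₗ[ℂ] lp (fun _ : (Fin d₂ → ℕ) => ℂ) 2))
          ≤ ((M ^ (min d₁ d₂) : ℕ) : Cardinal) ∧
        ‖T - T₀‖ ≤ A * Real.exp (-(r/2 * (M:ℝ) ^ (1/(2*s)))) := by
  classical
  obtain ⟨C, hC, hmat0⟩ := ha r hr
  have hε : (0:ℝ) < 1/(2*s) := by positivity
  have hmat : ∀ (α : Fin d₂ → ℕ) (β : Fin d₁ → ℕ), ‖T (lp.single 2 β 1) α‖ ≤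
      C * Real.exp (-(r * msz α ^ (1/(2*s)))) * Real.exp (-(r * msz β ^ (1/(2*s)))) := by
    intro α β
    rw [← coord_eq_inner (T (lp.single 2 β 1)) α]
    refine (hmat0 α β).trans (le_of_eq ?_)
    have h1 : Real.exp (-(r * (msz α ^ (1/(2*s)) + msz β ^ (1/(2*s)))))
        = Real.exp (-(r * msz α ^ (1/(2*s)))) * Real.exp (-(r * msz β ^ (1/(2*s)))) := by
      rw [← Real.exp_add]; congr 1; ring
    rw [h1, ← mul_assoc]
  have hs₁ : Summable fun β : Fin d₁ → ℕ => Real.exp (-(r * msz β ^ (1/(2*s)))) :=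
    summable_exp_msz hr hε
  have hs₂lin : Summable fun α : Fin d₂ → ℕ => Real.exp (-(r * msz α ^ (1/(2*s)))) :=
    summable_exp_msz hr hε
  have hs₂ : Summable fun α : Fin d₂ → ℕ => Real.exp (-(r * msz α ^ (1/(2*s)))) ^ 2 := by
    refine (summable_exp_msz (t := 2*r) (by positivity) hε).congr fun α => ?_
    rw [pow_two, ← Real.exp_add]; congr 1; ring
  rcases le_total d₂ d₁ with hcc | hcc
  · -- project the codomain side
    have hmin : min d₁ d₂ = d₂ := min_eq_right hcc
    refine ⟨C * (∑' β : Fin d₁ → ℕ, Real.exp (-(r * msz β ^ (1/(2*s))))) *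
        Real.sqrt (∑' α : Fin d₂ → ℕ, Real.exp (-(r * msz α ^ (1/(2*s))))),
      mul_nonneg (mul_nonneg hC.le (tsum_nonneg fun β => (Real.exp_pos _).le))
        (Real.sqrt_nonneg _), ?_⟩
    intro M
    obtain ⟨T₀, hrank, hnorm⟩ := caseA T C
      (fun β => Real.exp (-(r * msz β ^ (1/(2*s)))))
      (fun α => Real.exp (-(r * msz α ^ (1/(2*s)))))
      hC.le (fun β => (Real.exp_pos _).le) (fun α => (Real.exp_pos _).le)
      hs₁ hs₂ hmat (box d₂ M)
    refine ⟨T₀, ?_, ?_⟩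
    · rw [box_card] at hrank
      rwa [hmin]
    · refine hnorm.trans ?_
      have htail := tail_sq_le (box d₂ M) (fun α => msz α ^ (1/(2*s))) r
        ((M:ℝ) ^ (1/(2*s))) hr
        (fun i hi => Real.rpow_le_rpow (Nat.cast_nonneg M) (box_compl hi) hε.le)
        hs₂lin
      have hsqrt := Real.sqrt_le_sqrt htail
      rw [Real.sqrt_mul (Real.exp_pos _).le, sqrt_exp_half] at hsqrt
      have hexp : -(r * (M:ℝ) ^ (1/(2*s))) / 2 = -(r/2 * (M:ℝ) ^ (1/(2*s))) := by ring
      rw [hexp] at hsqrt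
      calc C * (∑' β : Fin d₁ → ℕ, Real.exp (-(r * msz β ^ (1/(2*s))))) *
            Real.sqrt (∑' α : Fin d₂ → ℕ,
              (if α ∈ box d₂ M then 0 else Real.exp (-(r * msz α ^ (1/(2*s))))) ^ 2)
          ≤ C * (∑' β : Fin d₁ → ℕ, Real.exp (-(r * msz β ^ (1/(2*s))))) *
            (Real.exp (-(r/2 * (M:ℝ) ^ (1/(2*s)))) *
              Real.sqrt (∑' α : Fin d₂ → ℕ, Real.exp (-(r * msz α ^ (1/(2*s)))))) :=
            mul_le_mul_of_nonneg_left hsqrt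
              (mul_nonneg hC.le (tsum_nonneg fun β => (Real.exp_pos _).le))
        _ = C * (∑' β : Fin d₁ → ℕ, Real.exp (-(r * msz β ^ (1/(2*s))))) *
            Real.sqrt (∑' α : Fin d₂ → ℕ, Real.exp (-(r * msz α ^ (1/(2*s))))) *
            Real.exp (-(r/2 * (M:ℝ) ^ (1/(2*s)))) := by ring
  · -- project the domain side
    have hmin : min d₁ d₂ = d₁ := min_eq_left hcc
    have hs₁half : Summable fun β : Fin d₁ → ℕ => Real.exp (-(r/2 * msz β ^ (1/(2*s)))) :=
      summable_exp_msz (by positivity) hε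
    refine ⟨C * (∑' β : Fin d₁ → ℕ, Real.exp (-(r/2 * msz β ^ (1/(2*s))))) *
        Real.sqrt (∑' α : Fin d₂ → ℕ, Real.exp (-(r * msz α ^ (1/(2*s)))) ^ 2),
      mul_nonneg (mul_nonneg hC.le (tsum_nonneg fun β => (Real.exp_pos _).le))
        (Real.sqrt_nonneg _), ?_⟩
    intro M
    obtain ⟨T₀, hrank, hnorm⟩ := caseB T C
      (fun β => Real.exp (-(r * msz β ^ (1/(2*s)))))
      (fun α => Real.exp (-(r * msz α ^ (1/(2*s)))))
      hC.le (fun β => (Real.exp_pos _).le) (fun α => (Real.exp_pos _).le)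
      hs₁ hs₂ hmat (box d₁ M)
    refine ⟨T₀, ?_, ?_⟩
    · rw [box_card] at hrank
      rwa [hmin]
    · refine hnorm.trans ?_
      have htail := tail_lin_le (box d₁ M) (fun β => msz β ^ (1/(2*s))) r
        ((M:ℝ) ^ (1/(2*s))) hr
        (fun i hi => Real.rpow_le_rpow (Nat.cast_nonneg M) (box_compl hi) hε.le)
        hs₁half
      calc C * (∑' β : Fin d₁ → ℕ,
            (if β ∈ box d₁ M then 0 else Real.exp (-(r * msz β ^ (1/(2*s)))))) *
            Real.sqrt (∑' α : Fin d₂ → ℕ, Real.exp (-(r * msz α ^ (1/(2*s)))) ^ 2)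
          ≤ C * (Real.exp (-(r/2 * (M:ℝ) ^ (1/(2*s)))) *
              ∑' β : Fin d₁ → ℕ, Real.exp (-(r/2 * msz β ^ (1/(2*s))))) *
            Real.sqrt (∑' α : Fin d₂ → ℕ, Real.exp (-(r * msz α ^ (1/(2*s)))) ^ 2) := by
            refine mul_le_mul_of_nonneg_right
              (mul_le_mul_of_nonneg_left htail hC.le) (Real.sqrt_nonneg _)
        _ = C * (∑' β : Fin d₁ → ℕ, Real.exp (-(r/2 * msz β ^ (1/(2*s))))) *
            Real.sqrt (∑' α : Fin d₂ → ℕ, Real.exp (-(r * msz α ^ (1/(2*s)))) ^ 2) *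
            Real.exp (-(r/2 * (M:ℝ) ^ (1/(2*s)))) := by ring

lemma part1
    (s : ℝ) (hs : 0 < s) (d₁ d₂ : ℕ) (hd₁ : 1 ≤ d₁) (hd₂ : 1 ≤ d₂)
    (T : lp (fun _ : (Fin d₁ → ℕ) => ℂ) 2 →L[ℂ] lp (fun _ : (Fin d₂ → ℕ) => ℂ) 2)
    (ha : ∀ r > (0:ℝ), ∃ C > (0:ℝ), ∀ (α : Fin d₂ → ℕ) (β : Fin d₁ → ℕ),
      ‖inner (𝕜 := ℂ) (T (lp.single 2 β 1)) (lp.single 2 α 1)‖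
        ≤ C * Real.exp (-(r * (msz α ^ (1/(2*s)) + msz β ^ (1/(2*s)))))) :
    ∀ c > (0:ℝ), ∃ C' > (0:ℝ), ∀ k : ℕ, 1 ≤ k →
      singValue T k ≤ C' * Real.exp (-(c * (k : ℝ) ^ (1/(2*(min d₁ d₂ : ℝ)*s)))) := by
  intro c hc
  have hε : (0:ℝ) < 1/(2*s) := by positivity
  have h4pos : (0:ℝ) < (4:ℝ) ^ (1/(2*s)) := Real.rpow_pos_of_pos (by norm_num) _
  have hrpos : (0:ℝ) < 2 * c * (4:ℝ) ^ (1/(2*s)) := by positivity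
  obtain ⟨A, hA0, hA⟩ := key_approx s hs d₁ d₂ T ha (2 * c * (4:ℝ) ^ (1/(2*s))) hrpos
  have hmind : 1 ≤ min d₁ d₂ := le_min hd₁ hd₂
  have hminR : (0:ℝ) < (min d₁ d₂ : ℝ) := by
    have : (1:ℝ) ≤ min (d₁:ℝ) (d₂:ℝ) :=
      le_min (by exact_mod_cast hd₁) (by exact_mod_cast hd₂)
    linarith
  refine ⟨A + ‖T‖ * Real.exp c + 1, by positivity, ?_⟩
  intro k hk
  have hexp0 : (0:ℝ) < Real.exp (-(c * (k : ℝ) ^ (1/(2*(min d₁ d₂ : ℝ)*s)))) :=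
    Real.exp_pos _
  rcases eq_or_lt_of_le hk with hk1 | hk2
  · -- k = 1
    have hk1' : k = 1 := hk1.symm
    subst hk1'
    have hrank0 : Module.rank ℂ (LinearMap.range
        ((0 : lp (fun _ : (Fin d₁ → ℕ) => ℂ) 2 →L[ℂ] lp (fun _ : (Fin d₂ → ℕ) => ℂ) 2) :
          lp (fun _ : (Fin d₁ → ℕ) => ℂ) 2 →ₗ[ℂ] lp (fun _ : (Fin d₂ → ℕ) => ℂ) 2))
        ≤ ((1 - 1 : ℕ) : Cardinal) := by
      rw [ContinuousLinearMap.coe_zero, LinearMap.range_zero]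
      simp
    have h0 : singValue T 1 ≤ ‖T - 0‖ := singValue_le T 0 1 hrank0
    rw [sub_zero] at h0
    have hone : ((1:ℕ):ℝ) ^ (1/(2*(min d₁ d₂ : ℝ)*s)) = 1 := by
      rw [Nat.cast_one, Real.one_rpow]
    have hTbound : ‖T‖ ≤ (‖T‖ * Real.exp c) *
        Real.exp (-(c * ((1:ℕ):ℝ) ^ (1/(2*(min d₁ d₂ : ℝ)*s)))) := by
      rw [hone, mul_one, mul_assoc, ← Real.exp_add]
      simp
    refine h0.trans (hTbound.trans ?_)
    have := Real.exp_pos (-(c * ((1:ℕ):ℝ) ^ (1/(2*(min d₁ d₂ : ℝ)*s))))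
    nlinarith [norm_nonneg T]
  · -- k ≥ 2
    have hk2' : 2 ≤ k := hk2
    obtain ⟨M, hM1, hMd, hMk⟩ := choose_M (min d₁ d₂) k hmind hk2'
    obtain ⟨T₀, hrank, hnorm⟩ := hA M
    have hσ : singValue T k ≤ ‖T - T₀‖ :=
      singValue_le T T₀ k (hrank.trans (by exact_mod_cast Nat.cast_le.mpr hMd))
    -- exponent comparison
    have hγeq : 1/((min d₁ d₂ : ℕ):ℝ) * (1/(2*s)) = 1/(2*(min d₁ d₂ : ℝ)*s) := by
      rw [Nat.cast_min]
      have h1 : (min (d₁:ℝ) (d₂:ℝ)) ≠ 0 := by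
        rw [← Nat.cast_min]
        exact_mod_cast Nat.one_le_iff_ne_zero.mp hmind
      field_simp
    have hstep1 : ((k:ℝ) ^ (1/((min d₁ d₂:ℕ):ℝ)) / 4) ^ (1/(2*s)) ≤ (M:ℝ) ^ (1/(2*s)) :=
      Real.rpow_le_rpow (by positivity) hMk hε.le
    have hstep2 : ((k:ℝ) ^ (1/((min d₁ d₂:ℕ):ℝ)) / 4) ^ (1/(2*s))
        = (k:ℝ) ^ (1/(2*(min d₁ d₂ : ℝ)*s)) / (4:ℝ) ^ (1/(2*s)) := by
      rw [Real.div_rpow (by positivity) (by norm_num)]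
      congr 1
      rw [← Real.rpow_mul (Nat.cast_nonneg k), hγeq]
    have hstep3 : c * (k:ℝ) ^ (1/(2*(min d₁ d₂ : ℝ)*s))
        ≤ (2 * c * (4:ℝ) ^ (1/(2*s)))/2 * (M:ℝ) ^ (1/(2*s)) := by
      rw [hstep2] at hstep1
      have h5 : c * (4:ℝ) ^ (1/(2*s)) *
          ((k:ℝ) ^ (1/(2*(min d₁ d₂ : ℝ)*s)) / (4:ℝ) ^ (1/(2*s)))
          ≤ c * (4:ℝ) ^ (1/(2*s)) * (M:ℝ) ^ (1/(2*s)) :=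
        mul_le_mul_of_nonneg_left hstep1 (by positivity)
      have h6 : c * (4:ℝ) ^ (1/(2*s)) *
          ((k:ℝ) ^ (1/(2*(min d₁ d₂ : ℝ)*s)) / (4:ℝ) ^ (1/(2*s)))
          = c * (k:ℝ) ^ (1/(2*(min d₁ d₂ : ℝ)*s)) := by
        field_simp
      rw [h6] at h5
      calc c * (k:ℝ) ^ (1/(2*(min d₁ d₂ : ℝ)*s))
          ≤ c * (4:ℝ) ^ (1/(2*s)) * (M:ℝ) ^ (1/(2*s)) := h5
        _ = (2 * c * (4:ℝ) ^ (1/(2*s)))/2 * (M:ℝ) ^ (1/(2*s)) := by ring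
    have hexp : Real.exp (-((2 * c * (4:ℝ) ^ (1/(2*s)))/2 * (M:ℝ) ^ (1/(2*s))))
        ≤ Real.exp (-(c * (k:ℝ) ^ (1/(2*(min d₁ d₂ : ℝ)*s)))) := by
      apply Real.exp_le_exp.mpr
      linarith
    calc singValue T k ≤ ‖T - T₀‖ := hσ
      _ ≤ A * Real.exp (-((2 * c * (4:ℝ) ^ (1/(2*s)))/2 * (M:ℝ) ^ (1/(2*s)))) := hnorm
      _ ≤ A * Real.exp (-(c * (k:ℝ) ^ (1/(2*(min d₁ d₂ : ℝ)*s)))) :=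
          mul_le_mul_of_nonneg_left hexp hA0
      _ ≤ (A + ‖T‖ * Real.exp c + 1) *
            Real.exp (-(c * (k:ℝ) ^ (1/(2*(min d₁ d₂ : ℝ)*s)))) := by
          have h7 : (0:ℝ) < Real.exp c := Real.exp_pos c
          have h8 : (A + ‖T‖ * Real.exp c + 1) *
              Real.exp (-(c * (k:ℝ) ^ (1/(2*(min d₁ d₂ : ℝ)*s))))
              = A * Real.exp (-(c * (k:ℝ) ^ (1/(2*(min d₁ d₂ : ℝ)*s))))
              + (‖T‖ * Real.exp c + 1) *
                Real.exp (-(c * (k:ℝ) ^ (1/(2*(min d₁ d₂ : ℝ)*s)))) := by ring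
          have h9 : 0 ≤ (‖T‖ * Real.exp c + 1) *
              Real.exp (-(c * (k:ℝ) ^ (1/(2*(min d₁ d₂ : ℝ)*s)))) := by
            apply mul_nonneg _ hexp0.le
            have := norm_nonneg T
            nlinarith
          linarith

end Stmt12Aux

open Stmt12Aux in
/-- If the matrix of a bounded operator `T : ℓ²(ℕ^{d₁}) → ℓ²(ℕ^{d₂})`
satisfies, for every `r > 0`, `|⟨T e_β, e_α⟩| ≤ C_r e^{-r(|α|^{1/(2s)} + |β|^{1/(2s)})}`
(Beurling–Pilipović kernel of order `s`), then with `d = min(d₁,d₂)`, for every `c > 0`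
there is `C'_c > 0` with `σ_k(T) ≤ C'_c e^{-c k^{1/(2ds)}}` for all `k ≥ 1`; in particular
`∑_k σ_k(T)^p < ∞` for every `p > 0`. -/
theorem stmt12
    (s : ℝ) (hs : 0 < s) (d₁ d₂ : ℕ) (hd₁ : 1 ≤ d₁) (hd₂ : 1 ≤ d₂)
    (T : lp (fun _ : (Fin d₁ → ℕ) => ℂ) 2 →L[ℂ] lp (fun _ : (Fin d₂ → ℕ) => ℂ) 2)
    (ha : ∀ r > (0:ℝ), ∃ C > (0:ℝ), ∀ (α : Fin d₂ → ℕ) (β : Fin d₁ → ℕ),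
      ‖inner (𝕜 := ℂ) (T (lp.single 2 β 1)) (lp.single 2 α 1)‖
        ≤ C * Real.exp (-(r * (msz α ^ (1/(2*s)) + msz β ^ (1/(2*s)))))) :
    (∀ c > (0:ℝ), ∃ C' > (0:ℝ), ∀ k : ℕ, 1 ≤ k →
      singValue T k ≤ C' * Real.exp (-(c * (k : ℝ) ^ (1/(2*(min d₁ d₂ : ℝ)*s))))) ∧
    (∀ p > (0:ℝ), Summable fun k : ℕ => singValue T (k + 1) ^ p) := by
  have hp1 := part1 s hs d₁ d₂ hd₁ hd₂ T ha
  refine ⟨hp1, ?_⟩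
  intro p hp
  obtain ⟨C', hC'0, hC'⟩ := hp1 1 one_pos
  have hminR : (0:ℝ) < min (d₁:ℝ) (d₂:ℝ) :=
    lt_min (by exact_mod_cast hd₁) (by exact_mod_cast hd₂)
  have hγ : (0:ℝ) < 1/(2*(min d₁ d₂ : ℝ)*s) := by
    apply div_pos one_pos
    have := mul_pos (mul_pos (by norm_num : (0:ℝ) < 2) hminR) hs
    convert this using 2
  have hsummand : Summable fun k : ℕ =>
      C' ^ p * Real.exp (-(p * ((k+1:ℕ):ℝ) ^ (1/(2*(min d₁ d₂ : ℝ)*s)))) := by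
    have h1 := summable_exp_1d hp hγ
    have h2 := (summable_nat_add_iff
      (f := fun n : ℕ => Real.exp (-(p * (n:ℝ) ^ (1/(2*(min d₁ d₂ : ℝ)*s))))) 1).mpr h1
    exact h2.mul_left _
  refine Summable.of_nonneg_of_le
    (fun k => Real.rpow_nonneg (singValue_nonneg T _) p) (fun k => ?_) hsummand
  have hb := hC' (k+1) (by omega)
  have h0 : 0 ≤ singValue T (k+1) := singValue_nonneg T _
  calc singValue T (k+1) ^ p
      ≤ (C' * Real.exp (-(1 * ((k+1:ℕ):ℝ) ^ (1/(2*(min d₁ d₂ : ℝ)*s))))) ^ p :=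
        Real.rpow_le_rpow h0 hb hp.le
    _ = C' ^ p * Real.exp (-(p * ((k+1:ℕ):ℝ) ^ (1/(2*(min d₁ d₂ : ℝ)*s)))) := by
        rw [Real.mul_rpow hC'0.le (Real.exp_pos _).le,
          ← Real.exp_mul]
        congr 1
        ring
end

section
/- Let s > 0, ρ > 0 and d ≥ 1, and let T be a bounded, self-adjoint, positive semi-definite linear operator on ℓ²(ℕ^d) whose matrix satisfies |⟨T e_β, e_α⟩| ≤ C e^{−r(|α|^{1/(2s)} + |β|^{1/(2s)})} for some C, r > 0 and all α, β ∈ ℕ^d. Let T^ρ denote the ρ-th power of T defined via the continuous functional calculus (applying t ↦ t^ρ to T). Then there exist C', r' > 0 such that |⟨T^ρ e_β, e_α⟩| ≤ C' e^{−r'(|α|^{1/(2s)} + |β|^{1/(2s)})} for all α, β ∈ ℕ^d. -/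
set_option maxHeartbeats 2000000 in
set_option synthInstance.maxHeartbeats 400000 in
/-- If `T` is a bounded, self-adjoint, positive semi-definite operator on
`ℓ²(ℕ^d)` whose matrix satisfies `|⟨T e_β, e_α⟩| ≤ C e^{-r(|α|^{1/(2s)} + |β|^{1/(2s)})}`
for some `C, r > 0`, then the power `T^ρ` (`ρ > 0`), defined by the continuous functional
calculus applied to `t ↦ t^ρ`, has a matrix satisfying a bound of the same form:
`|⟨T^ρ e_β, e_α⟩| ≤ C' e^{-r'(|α|^{1/(2s)} + |β|^{1/(2s)})}` for some `C', r' > 0`. -/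
theorem stmt16
    (s ρ : ℝ) (hs : 0 < s) (hρ : 0 < ρ) (d : ℕ) (hd : 1 ≤ d)
    (T : lp (fun _ : (Fin d → ℕ) => ℂ) 2 →L[ℂ] lp (fun _ : (Fin d → ℕ) => ℂ) 2)
    (hsa : IsSelfAdjoint T) (hpos : T.IsPositive)
    (C r : ℝ) (hC : 0 < C) (hr : 0 < r)
    (ha : ∀ α β : Fin d → ℕ,
      ‖inner (𝕜 := ℂ) (T (lp.single 2 β 1)) (lp.single 2 α 1)‖
        ≤ C * Real.exp (-(r * (msz α ^ (1/(2*s)) + msz β ^ (1/(2*s)))))) :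
    ∃ C' > (0:ℝ), ∃ r' > (0:ℝ), ∀ α β : Fin d → ℕ,
      ‖inner (𝕜 := ℂ) ((cfc (instCFC := IsSelfAdjoint.instContinuousFunctionalCalculus) (fun x : ℝ => x ^ ρ) T) (lp.single 2 β 1)) (lp.single 2 α 1)‖
        ≤ C' * Real.exp (-(r' * (msz α ^ (1/(2*s)) + msz β ^ (1/(2*s))))) := by
  classical
  letI : ContinuousFunctionalCalculus ℝ (lp (fun _ : (Fin d → ℕ) => ℂ) 2 →L[ℂ] lp (fun _ : (Fin d → ℕ) => ℂ) 2) IsSelfAdjoint :=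
    IsSelfAdjoint.instContinuousFunctionalCalculus
  set H := lp (fun _ : (Fin d → ℕ) => ℂ) 2
  haveI : Nontrivial H := by
    refine ⟨⟨lp.single 2 (fun _ => 0) 1, 0, fun hc => ?_⟩⟩
    have h := lp.norm_single (E := fun _ : (Fin d → ℕ) => ℂ) (p := 2)
      (by norm_num) (fun _ => 0) (1:ℂ)
    rw [hc] at h; simp at h
  set e : (Fin d → ℕ) → H := fun α => lp.single 2 α 1 with he
  have hnorm_e : ∀ α, ‖e α‖ = 1 := by
    intro α
    have := lp.norm_single (E := fun _ : (Fin d → ℕ) => ℂ) (p := 2)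
      (by norm_num) α (1:ℂ)
    exact this.trans norm_one
  set u : (Fin d → ℕ) → ℝ := fun α => msz α ^ (1/(2*s)) with hu_def
  have hu : ∀ α, 0 ≤ u α := fun α =>
    Real.rpow_nonneg (by unfold msz; positivity) _
  have hTnn : 0 ≤ T := (ContinuousLinearMap.nonneg_iff_isPositive T).mpr hpos
  have h1 : ∀ x ∈ spectrum ℝ T, 0 ≤ x := spectrum_nonneg_of_nonneg hTnn
  have h2 : ∀ x ∈ spectrum ℝ T, x ≤ ‖T‖ := fun x hx =>
    (Real.le_norm_self x).trans (spectrum.norm_le_norm_of_mem hx)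
  have hcont : Continuous (fun x : ℝ => x ^ (ρ/2)) :=
    Real.continuous_rpow_const (by positivity)
  set R := cfc (fun x : ℝ => x ^ (ρ/2)) T with hR
  have hRsa : IsSelfAdjoint R := cfc_predicate _ T
  have hmul : R * R = cfc (fun x : ℝ => x ^ ρ) T := by
    rw [hR, ← cfc_mul _ _ T hcont.continuousOn hcont.continuousOn]
    apply cfc_congr
    intro x hx
    show x ^ (ρ/2) * x ^ (ρ/2) = x ^ ρ
    rw [← Real.rpow_add' (h1 x hx) (by positivity : (0:ℝ) < ρ/2 + ρ/2).ne', add_halves]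
  set S := cfc (fun x : ℝ => x ^ ρ) T with hS
  set r' : ℝ := r * ρ / (ρ + 1) with hr'_def
  have hρ1 : (ρ + 1) ≠ 0 := by positivity
  have hr' : 0 < r' := by rw [hr'_def]; positivity
  set K : ℝ := 1 + C * ‖T‖ ^ ρ with hK_def
  have hTρ : (0:ℝ) ≤ ‖T‖ ^ ρ := Real.rpow_nonneg (norm_nonneg T) ρ
  have hK : 0 < K := by rw [hK_def]; positivity
  -- diagonal bound
  have hdiag : ∀ α, ‖R (e α)‖ ^ 2 ≤ K * Real.exp (-(2 * r') * u α) := by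
    intro α
    set ε : ℝ := Real.exp (-(2*r/(ρ+1)) * u α) with hε_def
    have hε : 0 < ε := Real.exp_pos _
    set c : ℝ := ‖T‖ ^ ρ / ε with hc_def
    have hc : 0 ≤ c := div_nonneg hTρ hε.le
    have hop : S ≤ cfc (fun x : ℝ => ε^ρ + c * x) T := by
      rw [hS]
      apply cfc_mono ?_ (Real.continuous_rpow_const hρ.le).continuousOn (by fun_prop)
      intro x hx
      rcases le_or_gt x ε with h | h
      · have h3 : x ^ ρ ≤ ε ^ ρ := Real.rpow_le_rpow (h1 x hx) h hρ.le
        nlinarith [mul_nonneg hc (h1 x hx)]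
      · have hxρ : x ^ ρ ≤ ‖T‖ ^ ρ := Real.rpow_le_rpow (h1 x hx) (h2 x hx) hρ.le
        have hεle : ‖T‖ ^ ρ ≤ c * x := by
          rw [hc_def, div_mul_eq_mul_div, le_div_iff₀ hε]
          nlinarith
        have : (0:ℝ) ≤ ε ^ ρ := Real.rpow_nonneg hε.le ρ
        linarith
    have hB : cfc (fun x : ℝ => ε^ρ + c * x) T
        = algebraMap ℝ (H →L[ℂ] H) (ε^ρ) + c • T := by
      rw [cfc_const_add (ε^ρ) (fun x => c * x) T (by fun_prop) hsa,
        cfc_const_mul c (fun x => x) T (by fun_prop), cfc_id' ℝ T]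
    rw [hB] at hop
    rw [ContinuousLinearMap.le_def] at hop
    have hineq := hop.re_inner_nonneg_left (e α)
    have hSe : RCLike.re (inner (𝕜 := ℂ) (S (e α)) (e α)) = ‖R (e α)‖ ^ 2 := by
      rw [← hmul]
      have h0 : (R * R) (e α) = R (R (e α)) := rfl
      rw [h0]
      have hadj : ContinuousLinearMap.adjoint R = R := hRsa
      have h6 := ContinuousLinearMap.adjoint_inner_left R (e α) (R (e α))
      rw [hadj] at h6
      rw [h6, inner_self_eq_norm_sq]
    have hexp : RCLike.re (inner (𝕜 := ℂ)
        ((algebraMap ℝ (H →L[ℂ] H) (ε^ρ) + c • T - S) (e α)) (e α))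
        = ε^ρ * ‖e α‖^2 + c * RCLike.re (inner (𝕜 := ℂ) (T (e α)) (e α))
          - ‖R (e α)‖ ^ 2 := by
      rw [ContinuousLinearMap.sub_apply, ContinuousLinearMap.add_apply,
        Algebra.algebraMap_eq_smul_one, ContinuousLinearMap.smul_apply,
        ContinuousLinearMap.one_apply, ContinuousLinearMap.smul_apply,
        inner_sub_left, inner_add_left,
        RCLike.real_smul_eq_coe_smul (K := ℂ) (ε^ρ) (e α),
        RCLike.real_smul_eq_coe_smul (K := ℂ) c (T (e α)),
        inner_smul_left, inner_smul_left, RCLike.conj_ofReal, RCLike.conj_ofReal,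
        map_sub, map_add, RCLike.re_ofReal_mul, RCLike.re_ofReal_mul,
        inner_self_eq_norm_sq, hSe]
    rw [hexp] at hineq
    simp only [hnorm_e α, one_pow, mul_one] at hineq
    have hTdiag : RCLike.re (inner (𝕜 := ℂ) (T (e α)) (e α))
        ≤ C * Real.exp (-(2*r) * u α) := by
      refine (RCLike.re_le_norm _).trans ?_
      have h7 : ‖inner (𝕜 := ℂ) (T (e α)) (e α)‖
          ≤ C * Real.exp (-(r * (msz α ^ (1/(2*s)) + msz α ^ (1/(2*s))))) := ha α α
      refine h7.trans (le_of_eq ?_)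
      congr 1
      simp only [hu_def]
      ring
    have key : ε^ρ ≤ Real.exp (-(2*r') * u α) := by
      rw [hε_def, ← Real.exp_mul]
      apply le_of_eq
      congr 1
      rw [hr'_def]
      ring
    have hEdiv : Real.exp (-(2*r) * u α) / ε = Real.exp (-(2*r') * u α) := by
      rw [hε_def, ← Real.exp_sub]
      congr 1
      rw [hr'_def]
      field_simp
      ring
    have key2 : c * (C * Real.exp (-(2*r) * u α))
        ≤ C * ‖T‖^ρ * Real.exp (-(2*r') * u α) := by
      apply le_of_eq
      rw [hc_def, ← hEdiv]
      field_simp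
    have hle2 : ‖R (e α)‖^2 ≤ ε^ρ + c * (C * Real.exp (-(2*r) * u α)) := by
      nlinarith [hineq, hTdiag, hc]
    calc ‖R (e α)‖^2 ≤ ε^ρ + c * (C * Real.exp (-(2*r) * u α)) := hle2
      _ ≤ Real.exp (-(2*r') * u α) + C * ‖T‖^ρ * Real.exp (-(2*r') * u α) :=
          add_le_add key key2
      _ = K * Real.exp (-(2 * r') * u α) := by rw [hK_def]; ring
  -- off-diagonal via Cauchy-Schwarz
  refine ⟨K, hK, r', hr', fun α β => ?_⟩
  have hSentry : inner (𝕜 := ℂ) (S (lp.single 2 β 1)) (lp.single 2 α 1)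
      = inner (𝕜 := ℂ) (R (e β)) (R (e α)) := by
    show inner (𝕜 := ℂ) (S (e β)) (e α) = _
    rw [← hmul]
    have h4 : (R * R) (e β) = R (R (e β)) := rfl
    rw [h4]
    have hadj : ContinuousLinearMap.adjoint R = R := hRsa
    have h5 := ContinuousLinearMap.adjoint_inner_left R (e α) (R (e β))
    rw [hadj] at h5
    exact h5
  have hprod : ‖R (e β)‖ * ‖R (e α)‖ ≤ K * Real.exp (-(r' * (u α + u β))) := by
    have hsq : (‖R (e β)‖ * ‖R (e α)‖)^2 ≤ (K * Real.exp (-(r' * (u α + u β))))^2 := by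
      calc (‖R (e β)‖ * ‖R (e α)‖)^2 = ‖R (e β)‖^2 * ‖R (e α)‖^2 := by ring
        _ ≤ (K * Real.exp (-(2*r') * u β)) * (K * Real.exp (-(2*r') * u α)) :=
            mul_le_mul (hdiag β) (hdiag α) (sq_nonneg _)
              (le_trans (sq_nonneg _) (hdiag β))
        _ = (K * Real.exp (-(r' * (u α + u β))))^2 := by
            have harg : (-(2*r') * u β) + (-(2*r') * u α)
                = -(r' * (u α + u β)) + -(r' * (u α + u β)) := by ring
            rw [show (K * Real.exp (-(2*r') * u β)) * (K * Real.exp (-(2*r') * u α))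
                = K^2 * Real.exp ((-(2*r') * u β) + (-(2*r') * u α)) by
                  rw [Real.exp_add]; ring]
            rw [harg, Real.exp_add]
            ring
    exact le_of_pow_le_pow_left₀ two_ne_zero (by positivity) hsq
  calc ‖inner (𝕜 := ℂ) (S (lp.single 2 β 1)) (lp.single 2 α 1)‖
      ≤ ‖R (e β)‖ * ‖R (e α)‖ := by rw [hSentry]; exact norm_inner_le_norm _ _
    _ ≤ K * Real.exp (-(r' * (u α + u β))) := hprod
    _ = K * Real.exp (-(r' * (msz α ^ (1/(2*s)) + msz β ^ (1/(2*s))))) := by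
        simp only [hu_def]
end

section
/- Let s > 0, d₁, d₂ ≥ 1, C > 0, h > 0, and let c : ℕ^{d₂} × ℕ^{d₁} → ℂ. Assume that for all integers N₁, N₂ ≥ 0: (∑_{α,β} (2|β| + d₁)^{2N₁} (2|α| + d₂)^{2N₂} |c(α,β)|²)^{1/2} ≤ C h^{N₁ + N₂} (N₁! N₂!)^{2s}. Then for every integer N ≥ 0: (∑_{α,β} (2|α| + 2|β| + d₁ + d₂)^{2N} |c(α,β)|²)^{1/2} ≤ C (2h)^N (N!)^{2s}. -/
open scoped ENNReal NNReal

/-- If the Hermite coefficients `c` satisfy the separate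
harmonic-oscillator estimates
`(∑_{α,β} (2|β|+d₁)^{2N₁} (2|α|+d₂)^{2N₂} |c(α,β)|²)^{1/2} ≤ C h^{N₁+N₂} (N₁!N₂!)^{2s}`
for all `N₁, N₂ ≥ 0`, then the joint estimate
`(∑_{α,β} (2|α|+2|β|+d₁+d₂)^{2N} |c(α,β)|²)^{1/2} ≤ C (2h)^N (N!)^{2s}`
holds for every `N ≥ 0`. -/
theorem stmt19
    (s : ℝ) (hs : 0 < s) (d₁ d₂ : ℕ) (hd₁ : 1 ≤ d₁) (hd₂ : 1 ≤ d₂)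
    (C h : ℝ) (hC : 0 < C) (hh : 0 < h)
    (c : (Fin d₂ → ℕ) → (Fin d₁ → ℕ) → ℂ)
    (hc : ∀ N₁ N₂ : ℕ,
      Summable (fun p : (Fin d₂ → ℕ) × (Fin d₁ → ℕ) =>
        (2 * msz p.2 + d₁) ^ (2*N₁) * (2 * msz p.1 + d₂) ^ (2*N₂) * ‖c p.1 p.2‖^2) ∧
      Real.sqrt (∑' p : (Fin d₂ → ℕ) × (Fin d₁ → ℕ),
          (2 * msz p.2 + d₁) ^ (2*N₁) * (2 * msz p.1 + d₂) ^ (2*N₂) * ‖c p.1 p.2‖^2)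
        ≤ C * h ^ (N₁ + N₂) *
            ((Nat.factorial N₁ : ℝ) * (Nat.factorial N₂ : ℝ)) ^ (2*s)) :
    ∀ N : ℕ,
      Summable (fun p : (Fin d₂ → ℕ) × (Fin d₁ → ℕ) =>
        (2 * msz p.1 + 2 * msz p.2 + d₁ + d₂) ^ (2*N) * ‖c p.1 p.2‖^2) ∧
      Real.sqrt (∑' p : (Fin d₂ → ℕ) × (Fin d₁ → ℕ),
          (2 * msz p.1 + 2 * msz p.2 + d₁ + d₂) ^ (2*N) * ‖c p.1 p.2‖^2)
        ≤ C * (2*h) ^ N * (Nat.factorial N : ℝ) ^ (2*s) := by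
  intro N
  classical
  set ι := (Fin d₂ → ℕ) × (Fin d₁ → ℕ) with hι
  set A : ι → ℝ := fun p => 2 * msz p.2 + d₁ with hAdef
  set B : ι → ℝ := fun p => 2 * msz p.1 + d₂ with hBdef
  have hmsz : ∀ {d : ℕ} (α : Fin d → ℕ), 0 ≤ msz α := by
    intro d α; unfold msz; positivity
  have hA0 : ∀ p : ι, 0 ≤ A p := by
    intro p; have := hmsz p.2; simp only [hAdef]; positivity
  have hB0 : ∀ p : ι, 0 ≤ B p := by
    intro p; have := hmsz p.1; simp only [hBdef]; positivity
  -- the pieces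
  set F : ℕ → ι → ℝ := fun k p => A p ^ k * B p ^ (N - k) * ‖c p.1 p.2‖ with hFdef
  have htoReal : (2 : ℝ≥0∞).toReal = 2 := by simp
  have hFnorm : ∀ (k : ℕ) (p : ι),
      ‖F k p‖ ^ ((2 : ℝ≥0∞).toReal)
        = A p ^ (2*k) * B p ^ (2*(N-k)) * ‖c p.1 p.2‖^2 := by
    intro k p
    have h1 : 0 ≤ F k p := by
      have := hA0 p; have := hB0 p; simp only [hFdef]; positivity
    rw [htoReal, Real.rpow_two, Real.norm_of_nonneg h1]
    simp only [hFdef]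
    rw [mul_pow, mul_pow, ← pow_mul, ← pow_mul]
    ring_nf
  have hmem : ∀ k : ℕ, Memℓp (F k) 2 := by
    intro k
    apply memℓp_gen
    have := (hc k (N - k)).1
    apply this.congr
    intro p
    exact (hFnorm k p).symm
  set g : ℕ → lp (fun _ : ι => ℝ) 2 := fun k => ⟨F k, hmem k⟩ with hgdef
  -- the combination
  set G : lp (fun _ : ι => ℝ) 2 :=
    ∑ k ∈ Finset.range (N+1), ((N.choose k : ℝ)) • g k with hGdef
  have hGcoe : ∀ p : ι, (G : ∀ _ : ι, ℝ) p
      = ∑ k ∈ Finset.range (N+1), (N.choose k : ℝ) * F k p := by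
    intro p
    rw [hGdef, lp.coeFn_sum]
    simp [hgdef, lp.coeFn_smul]
  have hGval : ∀ p : ι, (G : ∀ _ : ι, ℝ) p = (A p + B p) ^ N * ‖c p.1 p.2‖ := by
    intro p
    rw [hGcoe p, add_pow, Finset.sum_mul]
    apply Finset.sum_congr rfl
    intro k _
    simp only [hFdef]
    ring
  have hABeq : ∀ p : ι,
      (2 * msz p.1 + 2 * msz p.2 + (d₁ : ℝ) + d₂) = A p + B p := by
    intro p; simp only [hAdef, hBdef]; ring
  have htarget : ∀ p : ι,
      (2 * msz p.1 + 2 * msz p.2 + (d₁:ℝ) + d₂) ^ (2*N) * ‖c p.1 p.2‖^2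
        = ‖(G : ∀ _ : ι, ℝ) p‖ ^ ((2:ℝ≥0∞).toReal) := by
    intro p
    have hG0 : 0 ≤ (G : ∀ _ : ι, ℝ) p := by
      rw [hGval p]; have := hA0 p; have := hB0 p; positivity
    rw [htoReal, Real.rpow_two, Real.norm_of_nonneg hG0, hGval p, hABeq p,
      mul_pow, ← pow_mul, mul_comm N 2]
  have hsum : Summable (fun p : ι =>
      (2 * msz p.1 + 2 * msz p.2 + (d₁:ℝ) + d₂) ^ (2*N) * ‖c p.1 p.2‖^2) := by
    have := (lp.memℓp G).summable (by norm_num : 0 < (2:ℝ≥0∞).toReal)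
    exact this.congr fun p => (htarget p).symm
  refine ⟨hsum, ?_⟩
  -- norms
  have hnorm_eq : Real.sqrt (∑' p : ι,
      (2 * msz p.1 + 2 * msz p.2 + (d₁:ℝ) + d₂) ^ (2*N) * ‖c p.1 p.2‖^2) = ‖G‖ := by
    rw [lp.norm_eq_tsum_rpow (by norm_num) G]
    rw [show (∑' p : ι, (2 * msz p.1 + 2 * msz p.2 + (d₁:ℝ) + d₂) ^ (2*N) * ‖c p.1 p.2‖^2)
        = ∑' p : ι, ‖(G : ∀ _ : ι, ℝ) p‖ ^ ((2:ℝ≥0∞).toReal) from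
      tsum_congr htarget]
    rw [htoReal, Real.sqrt_eq_rpow]

  rw [hnorm_eq]
  have hgnorm : ∀ k ∈ Finset.range (N+1),
      ‖g k‖ ≤ C * h ^ N * ((Nat.factorial N : ℝ)) ^ (2*s) := by
    intro k hk
    have hkN : k ≤ N := Nat.lt_succ_iff.mp (Finset.mem_range.mp hk)
    have hb := (hc k (N - k)).2
    have hkk : k + (N - k) = N := Nat.add_sub_cancel' hkN
    rw [hkk] at hb
    have hnorm_g : ‖g k‖ = Real.sqrt (∑' p : ι,
        A p ^ (2*k) * B p ^ (2*(N-k)) * ‖c p.1 p.2‖^2) := by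
      rw [lp.norm_eq_tsum_rpow (by norm_num) (g k)]
      rw [show (∑' p : ι, ‖(g k : ∀ _ : ι, ℝ) p‖ ^ ((2:ℝ≥0∞).toReal))
          = ∑' p : ι, A p ^ (2*k) * B p ^ (2*(N-k)) * ‖c p.1 p.2‖^2 from
        tsum_congr fun p => hFnorm k p]
      rw [Real.sqrt_eq_rpow, htoReal]

    rw [hnorm_g]
    refine le_trans hb ?_
    have hfac : ((Nat.factorial k : ℝ) * (Nat.factorial (N-k) : ℝ)) ^ (2*s)
        ≤ ((Nat.factorial N : ℝ)) ^ (2*s) := by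
      apply Real.rpow_le_rpow (by positivity) ?_ (by positivity)
      have := Nat.choose_mul_factorial_mul_factorial hkN
      have h1 : Nat.factorial k * Nat.factorial (N - k) ≤ Nat.factorial N := by
        calc Nat.factorial k * Nat.factorial (N - k)
            ≤ N.choose k * (Nat.factorial k * Nat.factorial (N - k)) :=
              Nat.le_mul_of_pos_left _ (Nat.choose_pos hkN)
          _ = Nat.factorial N := by rw [← mul_assoc]; exact this
      exact_mod_cast h1
    calc C * h ^ N * ((Nat.factorial k : ℝ) * (Nat.factorial (N-k) : ℝ)) ^ (2*s)
        ≤ C * h ^ N * ((Nat.factorial N : ℝ)) ^ (2*s) := by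
          apply mul_le_mul_of_nonneg_left hfac (by positivity)
      _ = _ := rfl
  calc ‖G‖ ≤ ∑ k ∈ Finset.range (N+1), ‖(N.choose k : ℝ) • g k‖ :=
        norm_sum_le _ _
    _ = ∑ k ∈ Finset.range (N+1), (N.choose k : ℝ) * ‖g k‖ := by
        apply Finset.sum_congr rfl; intro k _
        rw [norm_smul, Real.norm_natCast]
    _ ≤ ∑ k ∈ Finset.range (N+1), (N.choose k : ℝ) *
          (C * h ^ N * ((Nat.factorial N : ℝ)) ^ (2*s)) := by
        apply Finset.sum_le_sum
        intro k hk
        exact mul_le_mul_of_nonneg_left (hgnorm k hk) (by positivity)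
    _ = (∑ k ∈ Finset.range (N+1), (N.choose k : ℝ)) *
          (C * h ^ N * ((Nat.factorial N : ℝ)) ^ (2*s)) := by
        rw [Finset.sum_mul]
    _ = (2:ℝ) ^ N * (C * h ^ N * ((Nat.factorial N : ℝ)) ^ (2*s)) := by
        norm_cast
        rw [Nat.sum_range_choose]
    _ = C * (2*h) ^ N * (Nat.factorial N : ℝ) ^ (2*s) := by
        rw [mul_pow]; ring
end
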